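/- arXiv:1303.2635 — 6 statements merged into one kernel-verified Lean document; each statement's English description precedes it below -/
import Mathlib

section
/- For nonzero integers n and n₁ with n₁ ≠ n, let R(n,n₁) = 3 n n₁ (n - n₁) - (1/n)(1 - n³/(n n₁ (n - n₁))). Then |R(n,n₁)| ≥ c |n| |n₁| |n - n₁| for some absolute constant c > 0. -/
lemma ostrovsky_aux_int (n n₁ : ℤ) (hn : n ≠ 0) (hn1 : n₁ ≠ 0) (hne : n₁ ≠ n) :
    2 ≤ |n| * |n₁| * |n - n₁| := by
  have h1 : 1 ≤ |n| := Int.one_le_abs hn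
  have h2 : 1 ≤ |n₁| := Int.one_le_abs hn1
  have h3 : 1 ≤ |n - n₁| := Int.one_le_abs (sub_ne_zero.mpr (Ne.symm hne))
  rcases le_or_gt 2 |n| with h | h
  · have hx : (1:ℤ) ≤ |n₁| * |n - n₁| := by nlinarith
    calc (2:ℤ) ≤ |n| * (|n₁| * |n - n₁|) := by nlinarith
    _ = |n| * |n₁| * |n - n₁| := by ring
  · rcases le_or_gt 2 |n₁| with h' | h'
    · have hx : (1:ℤ) ≤ |n| * |n - n₁| := by nlinarith
      calc (2:ℤ) ≤ |n₁| * (|n| * |n - n₁|) := by nlinarith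
      _ = |n| * |n₁| * |n - n₁| := by ring
    · have hb1 := abs_lt.mp h
      have hb2 := abs_lt.mp h'
      have hn' : n = 1 ∨ n = -1 := by omega
      have hn1' : n₁ = 1 ∨ n₁ = -1 := by omega
      rcases hn' with rfl | rfl <;> rcases hn1' with rfl | rfl <;> simp_all

/-- The resonance function for the periodic Ostrovsky equation,
`R(n,n₁) = 3 n n₁ (n - n₁) - (1/n)(1 - n³/(n n₁ (n - n₁)))`. -/
theorem ostrovsky_resonance_lower_bound :
    ∃ c : ℝ, 0 < c ∧ ∀ n n₁ : ℤ, n ≠ 0 → n₁ ≠ 0 → n₁ ≠ n →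
      c * (|(n : ℝ)| * |(n₁ : ℝ)| * |(n : ℝ) - (n₁ : ℝ)|) ≤
        |3 * (n : ℝ) * (n₁ : ℝ) * ((n : ℝ) - (n₁ : ℝ)) -
          (1 / (n : ℝ)) * (1 - (n : ℝ) ^ 3 / ((n : ℝ) * (n₁ : ℝ) * ((n : ℝ) - (n₁ : ℝ))))| := by
  refine ⟨3/2, by norm_num, ?_⟩
  intro n n₁ hn hn1 hne
  set A : ℝ := (n : ℝ) with hAdef
  set B : ℝ := (n₁ : ℝ) with hBdef
  have hA : A ≠ 0 := Int.cast_ne_zero.mpr hn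
  have hB : B ≠ 0 := Int.cast_ne_zero.mpr hn1
  have hABz : A - B ≠ 0 := by
    have : (n : ℝ) ≠ (n₁ : ℝ) := by exact_mod_cast (Ne.symm hne)
    exact sub_ne_zero.mpr this
  have h1 : 1 ≤ |A| := by
    have := Int.one_le_abs hn
    calc (1:ℝ) ≤ ((|n| : ℤ) : ℝ) := by exact_mod_cast this
    _ = |A| := by push_cast; rfl
  have h2 : 1 ≤ |B| := by
    have := Int.one_le_abs hn1
    calc (1:ℝ) ≤ ((|n₁| : ℤ) : ℝ) := by exact_mod_cast this
    _ = |B| := by push_cast; rfl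
  have h3 : 1 ≤ |A - B| := by
    have := Int.one_le_abs (sub_ne_zero.mpr (Ne.symm hne))
    calc (1:ℝ) ≤ ((|n - n₁| : ℤ) : ℝ) := by exact_mod_cast this
    _ = |A - B| := by push_cast; rfl
  have hQ : 2 ≤ |A| * |B| * |A - B| := by
    have := ostrovsky_aux_int n n₁ hn hn1 hne
    calc (2:ℝ) ≤ ((|n| * |n₁| * |n - n₁| : ℤ) : ℝ) := by exact_mod_cast this
    _ = |A| * |B| * |A - B| := by push_cast; ring
  -- simplify the correction term
  have hT : (1 / A) * (1 - A ^ 3 / (A * B * (A - B))) = 1 / A - A / (B * (A - B)) := by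
    field_simp
  rw [hT]
  -- bound the correction term
  have hb1 : |1 / A| ≤ 1 := by
    rw [abs_div, abs_one, div_le_one (by linarith : (0:ℝ) < |A|)]
    linarith
  have hb2 : |A / (B * (A - B))| ≤ 2 := by
    rw [abs_div, abs_mul]
    rw [div_le_iff₀ (by positivity : (0:ℝ) < |B| * |A - B|)]
    have hle : |A| ≤ |B| + |A - B| := by
      calc |A| = |B + (A - B)| := by ring_nf
      _ ≤ |B| + |A - B| := abs_add_le _ _
    nlinarith
  have hTb : |1 / A - A / (B * (A - B))| ≤ 3 := by
    calc |1 / A - A / (B * (A - B))| ≤ |1 / A| + |A / (B * (A - B))| := abs_sub _ _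
    _ ≤ 3 := by linarith
  have hmain : |3 * A * B * (A - B)| = 3 * (|A| * |B| * |A - B|) := by
    rw [abs_mul, abs_mul, abs_mul]
    norm_num; ring
  have hlow : |3 * A * B * (A - B)| - |1 / A - A / (B * (A - B))| ≤
      |3 * A * B * (A - B) - (1 / A - A / (B * (A - B)))| :=
    abs_sub_abs_le_abs_sub _ _
  rw [hmain] at hlow
  nlinarith
end

section
/- For every 0 < ρ < 1 there is a constant C = C(ρ) > 0 such that for all α ∈ ℝ, ∫_ℝ dβ / ((1 + |β|)^ρ (1 + |α - β|)) ≤ C · (1 + log(1 + |α|)) / (1 + |α|)^ρ. -/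
open MeasureTheory

private lemma conv_est_integrable_comp_abs {f : ℝ → ℝ}
    (hf : IntegrableOn (fun x => f |x|) (Set.Ioi 0)) :
    Integrable (fun x => f |x|) := by
  have int_Iic : IntegrableOn (fun x ↦ f |x|) (Set.Iic 0) := by
    rw [← Measure.map_neg_eq_self (volume : Measure ℝ)]
    let m : MeasurableEmbedding fun x : ℝ => -x := (Homeomorph.neg ℝ).measurableEmbedding
    rw [m.integrableOn_map_iff]
    simp_rw [Function.comp_def, abs_neg, Set.neg_preimage, Set.neg_Iic, neg_zero]
    exact Iff.mpr integrableOn_Ici_iff_integrableOn_Ioi hf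
  have := int_Iic.union hf
  rwa [Set.Iic_union_Ioi, integrableOn_univ] at this

private lemma conv_est_int_inv {r : ℝ} (hr : 0 ≤ r) :
    ∫ x in Set.Ioc (0:ℝ) r, (1+x)⁻¹ = Real.log (1+r) := by
  rw [← intervalIntegral.integral_of_le hr,
    intervalIntegral.integral_comp_add_left (fun x : ℝ => x⁻¹) 1,
    integral_inv (Set.notMem_uIcc_of_lt (by norm_num) (by linarith))]
  norm_num

private lemma conv_est_int_rpow {r ρ : ℝ} (hr : 0 ≤ r) (hρ : ρ < 1) :
    ∫ x in Set.Ioc (0:ℝ) r, (1+x) ^ (-ρ) = ((1+r) ^ (1-ρ) - 1)/(1-ρ) := by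
  rw [← intervalIntegral.integral_of_le hr,
    intervalIntegral.integral_comp_add_left (fun x : ℝ => x ^ (-ρ)) 1,
    integral_rpow (Or.inl (by linarith))]
  have h : -ρ + 1 = 1 - ρ := by ring
  norm_num [h, Real.one_rpow]

set_option maxHeartbeats 1000000 in
theorem convolution_estimate_rho (ρ : ℝ) (hρ0 : 0 < ρ) (hρ1 : ρ < 1) :
    ∃ C : ℝ, 0 < C ∧ ∀ α : ℝ,
      ∫ β : ℝ, 1 / ((1 + |β|) ^ ρ * (1 + |α - β|)) ≤
        C * (1 + Real.log (1 + |α|)) / (1 + |α|) ^ ρ := by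
  refine ⟨4 + 12/(1-ρ) + 4/ρ, by have h1 : (0:ℝ) < 1-ρ := sub_pos.mpr hρ1; positivity, fun α => ?_⟩
  set a : ℝ := 1 + |α| with ha
  have ha1 : 1 ≤ a := by simp [ha, abs_nonneg]
  have ha0 : 0 < a := by linarith
  have hL0 : 0 ≤ Real.log a := Real.log_nonneg ha1
  set L : ℝ := Real.log a with hLdef
  -- the three majorant profiles (as functions of |·|)
  set f1 : ℝ → ℝ := fun t => if t ≤ a/2 then (2/a)^ρ * (1+t)⁻¹ else 0 with hf1
  set f2 : ℝ → ℝ := fun t => if t ≤ 2*a then (2/a) * (1+t) ^ (-ρ) else 0 with hf2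
  set f3 : ℝ → ℝ := fun t => if 2*a < t then 2 * t ^ (-(1+ρ)) else 0 with hf3
  -- nonnegativity
  have hf1nn : ∀ t : ℝ, 0 ≤ t → 0 ≤ f1 t := by
    intro t ht; simp only [hf1]; split
    · have : (0:ℝ) < 1 + t := by linarith
      positivity
    · exact le_rfl
  have hf2nn : ∀ t : ℝ, 0 ≤ t → 0 ≤ f2 t := by
    intro t ht; simp only [hf2]; split
    · have : (0:ℝ) < 1 + t := by linarith
      positivity
    · exact le_rfl
  have hf3nn : ∀ t : ℝ, 0 ≤ t → 0 ≤ f3 t := by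
    intro t ht; simp only [hf3]; split
    · rename_i h; have : (0:ℝ) < t := lt_of_le_of_lt (by linarith) h
      positivity
    · exact le_rfl
  -- rewrite f1, f2, f3 ∘ abs as indicators
  have hind1 : (fun x : ℝ => f1 |x|) =
      Set.indicator (Set.Icc (-(a/2)) (a/2)) (fun x => (2/a)^ρ * (1+|x|)⁻¹) := by
    funext x
    by_cases h : |x| ≤ a/2
    · rw [Set.indicator_of_mem (Set.mem_Icc.mpr (abs_le.mp h))]
      simp only [hf1, if_pos h]
    · rw [Set.indicator_of_notMem (fun hm => h (abs_le.mpr (Set.mem_Icc.mp hm)))]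
      simp only [hf1, if_neg h]
  have hind2 : (fun x : ℝ => f2 |x|) =
      Set.indicator (Set.Icc (-(2*a)) (2*a)) (fun x => (2/a) * (1+|x|) ^ (-ρ)) := by
    funext x
    by_cases h : |x| ≤ 2*a
    · rw [Set.indicator_of_mem (Set.mem_Icc.mpr (abs_le.mp h))]
      simp only [hf2, if_pos h]
    · rw [Set.indicator_of_notMem (fun hm => h (abs_le.mpr (Set.mem_Icc.mp hm)))]
      simp only [hf2, if_neg h]
  -- integrability of the three pieces
  have hcont1 : Continuous (fun x : ℝ => (2/a)^ρ * (1+|x|)⁻¹) := by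
    refine continuous_const.mul (Continuous.inv₀ (continuous_const.add continuous_abs) ?_)
    intro x; have := abs_nonneg x; positivity
  have hcont2 : Continuous (fun x : ℝ => (2/a) * (1+|x|) ^ (-ρ)) := by
    refine continuous_const.mul ?_
    refine Continuous.rpow_const (continuous_const.add continuous_abs) (fun x => Or.inl ?_)
    have := abs_nonneg x; positivity
  have hi1 : Integrable (fun x : ℝ => f1 |x|) := by
    rw [hind1, integrable_indicator_iff measurableSet_Icc]
    exact hcont1.integrableOn_Icc
  have hi2 : Integrable (fun x : ℝ => f2 |x|) := by
    rw [hind2, integrable_indicator_iff measurableSet_Icc]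
    exact hcont2.integrableOn_Icc
  have h2a0 : (0:ℝ) < 2*a := by linarith
  have hi3ind : Integrable (Set.indicator (Set.Ioi (2*a)) (fun x : ℝ => 2 * x ^ (-(1+ρ)))) := by
    rw [integrable_indicator_iff measurableSet_Ioi]
    exact (integrableOn_Ioi_rpow_of_lt (by linarith) h2a0).const_mul 2
  have hi3 : Integrable (fun x : ℝ => f3 |x|) := by
    apply conv_est_integrable_comp_abs
    refine (hi3ind.integrableOn (s := Set.Ioi 0)).congr_fun ?_ measurableSet_Ioi
    intro x hx
    have hx0 : (0:ℝ) < x := hx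
    by_cases h : 2*a < x
    · rw [Set.indicator_of_mem (Set.mem_Ioi.mpr h)]
      simp only [hf3, abs_of_pos hx0, if_pos h]
    · rw [Set.indicator_of_notMem (fun hm => h (Set.mem_Ioi.mp hm))]
      simp only [hf3, abs_of_pos hx0, if_neg h]
  have hi1' : Integrable (fun β : ℝ => f1 |β - α|) := hi1.comp_sub_right α
  have hsum : Integrable (fun β : ℝ => f1 |β - α| + f2 |β| + f3 |β|) :=
    (hi1'.add hi2).add hi3
  -- pointwise bound
  have hpt : ∀ β : ℝ, 1 / ((1 + |β|) ^ ρ * (1 + |α - β|)) ≤ f1 |β - α| + f2 |β| + f3 |β| := by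
    intro β
    have hb0 : (0:ℝ) ≤ |β| := abs_nonneg β
    have hab : |α - β| = |β - α| := abs_sub_comm α β
    have h1b : (0:ℝ) < 1 + |β| := by linarith
    have hd0 : (0:ℝ) < 1 + |α - β| := by have := abs_nonneg (α - β); linarith
    have hp0 : (0:ℝ) < (1 + |β|) ^ ρ := Real.rpow_pos_of_pos h1b ρ
    by_cases hc1 : |β - α| ≤ a/2
    · -- near α : use f1
      have hbig : a/2 ≤ 1 + |β| := by
        have h1 : |α| - |β| ≤ |α - β| := abs_sub_abs_le_abs_sub α β
        rw [hab] at h1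
        have : a - 1 - |β| ≤ a/2 := by
          calc a - 1 - |β| = |α| - |β| := by rw [ha]; ring
          _ ≤ |β - α| := h1
          _ ≤ a/2 := hc1
        linarith
      have hbound : 1 / ((1 + |β|) ^ ρ * (1 + |α - β|)) ≤ f1 |β - α| := by
        have hf1v : f1 |β - α| = (2/a)^ρ * (1 + |β - α|)⁻¹ := by simp only [hf1, if_pos hc1]
        rw [hf1v, one_div, mul_inv, hab]
        refine mul_le_mul_of_nonneg_right ?_ (by positivity)
        have h2a : (2/a)^ρ = ((a/2) ^ ρ)⁻¹ := by
          rw [← Real.inv_rpow (by positivity)]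
          norm_num
        rw [h2a]
        refine inv_anti₀ (Real.rpow_pos_of_pos (by linarith) ρ) ?_
        exact Real.rpow_le_rpow (by positivity) hbig hρ0.le
      calc 1 / ((1 + |β|) ^ ρ * (1 + |α - β|)) ≤ f1 |β - α| := hbound
        _ ≤ f1 |β - α| + f2 |β| + f3 |β| := by
            have := hf2nn _ hb0; have := hf3nn _ hb0; linarith
    · by_cases hc2 : |β| ≤ 2*a
      · -- middle range : use f2
        have hbound : 1 / ((1 + |β|) ^ ρ * (1 + |α - β|)) ≤ f2 |β| := by
          have hf2v : f2 |β| = (2/a) * (1+|β|) ^ (-ρ) := by simp only [hf2, if_pos hc2]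
          rw [hf2v, one_div, mul_inv, mul_comm ((1 + |β|) ^ ρ)⁻¹ _]
          have hrw : ((1 + |β|) ^ ρ)⁻¹ = (1+|β|) ^ (-ρ) := by
            rw [Real.rpow_neg h1b.le]
          rw [hrw]
          refine mul_le_mul_of_nonneg_right ?_ (Real.rpow_nonneg h1b.le _)
          push_neg at hc1
          have : a/2 ≤ 1 + |α - β| := by rw [hab]; linarith
          calc (1 + |α - β|)⁻¹ ≤ (a/2)⁻¹ := by
                exact inv_anti₀ (by linarith) this
            _ = 2/a := by rw [inv_div]
        calc 1 / ((1 + |β|) ^ ρ * (1 + |α - β|)) ≤ f2 |β| := hbound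
          _ ≤ f1 |β - α| + f2 |β| + f3 |β| := by
              have := hf1nn _ (abs_nonneg (β - α)); have := hf3nn _ hb0; linarith
      · -- far range : use f3
        push_neg at hc2
        have hb0' : (0:ℝ) < |β| := lt_trans h2a0 hc2
        have hbound : 1 / ((1 + |β|) ^ ρ * (1 + |α - β|)) ≤ f3 |β| := by
          have hf3v : f3 |β| = 2 * |β| ^ (-(1+ρ)) := by simp only [hf3, if_pos hc2]
          rw [hf3v]
          have h1 : |β| ^ ρ ≤ (1 + |β|) ^ ρ :=
            Real.rpow_le_rpow hb0 (by linarith) hρ0.le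
          have h2 : |β|/2 ≤ 1 + |α - β| := by
            have h1' : |β| - |α| ≤ |β - α| := abs_sub_abs_le_abs_sub β α
            rw [← hab] at h1'
            have : |α| = a - 1 := by rw [ha]; ring
            have h2a' : a ≤ |β|/2 := by linarith
            linarith [this ▸ h1']
          have hprod : |β| ^ ρ * (|β|/2) ≤ (1 + |β|) ^ ρ * (1 + |α - β|) := by
            have := Real.rpow_nonneg hb0 ρ
            exact mul_le_mul h1 h2 (by positivity) (by positivity)
          have hppos : (0:ℝ) < |β| ^ ρ * (|β|/2) := by
            have := Real.rpow_pos_of_pos hb0' ρ; positivity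
          calc 1 / ((1 + |β|) ^ ρ * (1 + |α - β|)) ≤ 1 / (|β| ^ ρ * (|β|/2)) := by
                rw [one_div, one_div]
                exact inv_anti₀ hppos hprod
            _ = 2 * |β| ^ (-(1+ρ)) := by
                rw [Real.rpow_neg hb0, Real.rpow_add hb0', Real.rpow_one]
                field_simp
        calc 1 / ((1 + |β|) ^ ρ * (1 + |α - β|)) ≤ f3 |β| := hbound
          _ ≤ f1 |β - α| + f2 |β| + f3 |β| := by
              have := hf1nn _ (abs_nonneg (β - α)); have := hf2nn _ hb0; linarith
  -- integrability of the integrand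
  have hfcont : Continuous (fun β : ℝ => 1 / ((1 + |β|) ^ ρ * (1 + |α - β|))) := by
    apply Continuous.div continuous_const
    · apply Continuous.mul
      · refine Continuous.rpow_const (continuous_const.add continuous_abs) (fun x => Or.inl ?_)
        have := abs_nonneg x; positivity
      · exact continuous_const.add (continuous_const.sub continuous_id).abs
    · intro β
      have h1b : (0:ℝ) < 1 + |β| := by have := abs_nonneg β; linarith
      have hd0 : (0:ℝ) < 1 + |α - β| := by have := abs_nonneg (α - β); linarith
      have := Real.rpow_pos_of_pos h1b ρ
      positivity
  have hfint : Integrable (fun β : ℝ => 1 / ((1 + |β|) ^ ρ * (1 + |α - β|))) := by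
    refine hsum.mono' hfcont.aestronglyMeasurable ?_
    filter_upwards with β
    have h1b : (0:ℝ) < 1 + |β| := by have := abs_nonneg β; linarith
    have hd0 : (0:ℝ) < 1 + |α - β| := by have := abs_nonneg (α - β); linarith
    have hp0 := Real.rpow_pos_of_pos h1b ρ
    rw [Real.norm_eq_abs, abs_of_nonneg (by positivity)]
    exact hpt β
  -- main split
  have hmain : ∫ β : ℝ, 1 / ((1 + |β|) ^ ρ * (1 + |α - β|)) ≤
      (∫ x : ℝ, f1 |x|) + (∫ x : ℝ, f2 |x|) + (∫ x : ℝ, f3 |x|) := by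
    calc ∫ β : ℝ, 1 / ((1 + |β|) ^ ρ * (1 + |α - β|))
        ≤ ∫ β : ℝ, (f1 |β - α| + f2 |β| + f3 |β|) := integral_mono hfint hsum hpt
      _ = (∫ β : ℝ, f1 |β - α|) + (∫ x : ℝ, f2 |x|) + (∫ x : ℝ, f3 |x|) := by
          have e12 : Integrable (fun β : ℝ => f1 |β - α| + f2 |β|) := hi1'.add hi2
          rw [integral_add e12 hi3, integral_add hi1' hi2]
      _ = (∫ x : ℝ, f1 |x|) + (∫ x : ℝ, f2 |x|) + (∫ x : ℝ, f3 |x|) := by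
          rw [integral_sub_right_eq_self (fun x : ℝ => f1 |x|) α]
  -- evaluate the three integrals
  have haρ : (0:ℝ) < a ^ ρ := Real.rpow_pos_of_pos ha0 ρ
  have hval1 : (∫ x : ℝ, f1 |x|) ≤ 4 * (1 + L) / a ^ ρ := by
    rw [integral_comp_abs (f := f1)]
    have : ∫ x in Set.Ioi (0:ℝ), f1 x = (2/a)^ρ * Real.log (1 + a/2) := by
      have : ∀ x : ℝ, f1 x = Set.indicator (Set.Iic (a/2)) (fun x => (2/a)^ρ * (1+x)⁻¹) x := by
        intro x
        by_cases h : x ≤ a/2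
        · rw [Set.indicator_of_mem (Set.mem_Iic.mpr h)]; simp only [hf1, if_pos h]
        · rw [Set.indicator_of_notMem (fun hm => h (Set.mem_Iic.mp hm))]; simp only [hf1, if_neg h]
      rw [funext this, setIntegral_indicator measurableSet_Iic, Set.Ioi_inter_Iic,
        integral_const_mul, conv_est_int_inv (by positivity)]
    rw [this]
    have hlog : Real.log (1 + a/2) ≤ 1 + L := by
      calc Real.log (1 + a/2) ≤ Real.log (2*a) :=
            Real.log_le_log (by positivity) (by linarith)
        _ = Real.log 2 + Real.log a := Real.log_mul (by norm_num) (by positivity)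
        _ ≤ 1 + L := by
            have h2 : Real.log 2 ≤ 1 := by
              have := Real.log_le_sub_one_of_pos (by norm_num : (0:ℝ) < 2)
              linarith
            linarith
    have h2ρ : (2/a)^ρ = 2^ρ / a^ρ := Real.div_rpow (by norm_num : (0:ℝ) ≤ 2) ha0.le ρ
    have h2ρ2 : (2:ℝ)^ρ ≤ 2 := by
      calc (2:ℝ)^ρ ≤ (2:ℝ)^(1:ℝ) := Real.rpow_le_rpow_of_exponent_le (by norm_num) hρ1.le
        _ = 2 := Real.rpow_one 2
    have hlognn : 0 ≤ Real.log (1 + a/2) := Real.log_nonneg (by linarith)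
    calc 2 * ((2/a)^ρ * Real.log (1 + a/2)) = 2 * 2^ρ * Real.log (1 + a/2) / a^ρ := by
          rw [h2ρ]; ring
      _ ≤ 2 * 2 * (1 + L) / a^ρ := by
          apply div_le_div_of_nonneg_right ?_ haρ.le
          have h2p : (0:ℝ) ≤ 2^ρ := by positivity
          calc 2 * 2^ρ * Real.log (1 + a/2) ≤ 2 * 2 * Real.log (1 + a/2) := by nlinarith
            _ ≤ 2 * 2 * (1 + L) := by nlinarith
      _ = 4 * (1 + L) / a ^ ρ := by norm_num
  have hval2 : (∫ x : ℝ, f2 |x|) ≤ 12/(1-ρ) / a ^ ρ := by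
    rw [integral_comp_abs (f := f2)]
    have heval : ∫ x in Set.Ioi (0:ℝ), f2 x = (2/a) * (((1+2*a) ^ (1-ρ) - 1)/(1-ρ)) := by
      have : ∀ x : ℝ, f2 x = Set.indicator (Set.Iic (2*a)) (fun x => (2/a) * (1+x) ^ (-ρ)) x := by
        intro x
        by_cases h : x ≤ 2*a
        · rw [Set.indicator_of_mem (Set.mem_Iic.mpr h)]; simp only [hf2, if_pos h]
        · rw [Set.indicator_of_notMem (fun hm => h (Set.mem_Iic.mp hm))]; simp only [hf2, if_neg h]
      rw [funext this, setIntegral_indicator measurableSet_Iic, Set.Ioi_inter_Iic,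
        integral_const_mul, conv_est_int_rpow (by positivity) hρ1]
    rw [heval]
    have h1ρ : (0:ℝ) < 1 - ρ := by linarith
    have hkey : (1+2*a) ^ (1-ρ) ≤ 3 * (a * a ^ (-ρ)) := by
      calc (1+2*a) ^ (1-ρ) ≤ (3*a) ^ (1-ρ) :=
            Real.rpow_le_rpow (by positivity) (by linarith) h1ρ.le
        _ = 3 ^ (1-ρ) * a ^ (1-ρ) := Real.mul_rpow (by norm_num) ha0.le
        _ ≤ 3 * a ^ (1-ρ) := by
            refine mul_le_mul_of_nonneg_right ?_ (Real.rpow_nonneg ha0.le _)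
            calc (3:ℝ)^(1-ρ) ≤ (3:ℝ)^(1:ℝ) :=
                  Real.rpow_le_rpow_of_exponent_le (by norm_num) (by linarith)
              _ = 3 := Real.rpow_one 3
        _ = 3 * (a * a ^ (-ρ)) := by
            congr 1
            rw [show (1:ℝ) - ρ = 1 + -ρ from by ring, Real.rpow_add ha0, Real.rpow_one]
    have hanegρ : a ^ (-ρ) = (a ^ ρ)⁻¹ := Real.rpow_neg ha0.le ρ
    calc 2 * ((2/a) * (((1+2*a) ^ (1-ρ) - 1)/(1-ρ)))
        ≤ 2 * ((2/a) * ((3 * (a * a ^ (-ρ)))/(1-ρ))) := by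
          have h2a' : (0:ℝ) ≤ 2/a := by positivity
          have : ((1+2*a) ^ (1-ρ) - 1)/(1-ρ) ≤ (3 * (a * a ^ (-ρ)))/(1-ρ) := by
            apply div_le_div_of_nonneg_right ?_ h1ρ.le
            linarith
          nlinarith [this, mul_le_mul_of_nonneg_left this h2a']
      _ = 12/(1-ρ) / a ^ ρ := by
          rw [hanegρ]
          field_simp
          ring
  have hval3 : (∫ x : ℝ, f3 |x|) ≤ 4/ρ / a ^ ρ := by
    rw [integral_comp_abs (f := f3)]
    have heval : ∫ x in Set.Ioi (0:ℝ), f3 x = 2 * (-(2*a) ^ (-(1+ρ) + 1) / (-(1+ρ) + 1)) := by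
      have : ∀ x : ℝ, f3 x = Set.indicator (Set.Ioi (2*a)) (fun x => 2 * x ^ (-(1+ρ))) x := by
        intro x
        by_cases h : 2*a < x
        · rw [Set.indicator_of_mem (Set.mem_Ioi.mpr h)]; simp only [hf3, if_pos h]
        · rw [Set.indicator_of_notMem (fun hm => h (Set.mem_Ioi.mp hm))]; simp only [hf3, if_neg h]
      rw [funext this, setIntegral_indicator measurableSet_Ioi]
      have hss : Set.Ioi (0:ℝ) ∩ Set.Ioi (2*a) = Set.Ioi (2*a) := by
        apply Set.inter_eq_self_of_subset_right
        exact Set.Ioi_subset_Ioi h2a0.le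
      rw [hss, integral_const_mul, integral_Ioi_rpow_of_lt (by linarith) h2a0]
    rw [heval]
    have hsimp : -(1+ρ) + 1 = -ρ := by ring
    rw [hsimp]
    have h2aρ : (2*a) ^ (-ρ) ≤ a ^ (-ρ) :=
      Real.rpow_le_rpow_of_nonpos ha0 (by linarith) (by linarith)
    have hanegρ : a ^ (-ρ) = (a ^ ρ)⁻¹ := Real.rpow_neg ha0.le ρ
    calc 2 * (2 * (-(2*a) ^ (-ρ) / (-ρ))) = 4 * ((2*a) ^ (-ρ) / ρ) := by
          rw [neg_div_neg_eq]; ring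
      _ ≤ 4 * (a ^ (-ρ) / ρ) := by
          have : (2*a) ^ (-ρ) / ρ ≤ a ^ (-ρ) / ρ := div_le_div_of_nonneg_right h2aρ hρ0.le
          linarith
      _ = 4/ρ / a ^ ρ := by
          rw [hanegρ]
          field_simp
  -- combine
  have h1L : (1:ℝ) ≤ 1 + L := by linarith
  calc ∫ β : ℝ, 1 / ((1 + |β|) ^ ρ * (1 + |α - β|))
      ≤ (∫ x : ℝ, f1 |x|) + (∫ x : ℝ, f2 |x|) + (∫ x : ℝ, f3 |x|) := hmain
    _ ≤ 4 * (1 + L) / a ^ ρ + 12/(1-ρ) / a ^ ρ + 4/ρ / a ^ ρ := by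
        linarith [hval1, hval2, hval3]
    _ ≤ (4 + 12/(1-ρ) + 4/ρ) * (1 + L) / a ^ ρ := by
        rw [← add_div, ← add_div]
        apply div_le_div_of_nonneg_right ?_ haρ.le
        have h12 : (0:ℝ) ≤ 12/(1-ρ) := div_nonneg (by norm_num) (by linarith)
        have h4ρ : (0:ℝ) ≤ 4/ρ := div_nonneg (by norm_num) hρ0.le
        nlinarith
    _ = (4 + 12/(1-ρ) + 4/ρ) * (1 + Real.log (1 + |α|)) / (1 + |α|) ^ ρ := by
        rw [hLdef, ha]
end

section
/- There exists a constant C > 0 such that for every τ ∈ ℝ and every nonzero integer n, ∑_{n₁ ∈ ℤ, n₁ ≠ 0, n₁ ≠ n} log(2 + |τ + m(n₁) + m(n - n₁)|) / (1 + |τ + m(n₁) + m(n - n₁)|) ≤ C. -/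
open Real

/-- The dispersion symbol `m(k) = k³ - 1/k` of the periodic Ostrovsky equation. -/
noncomputable def mOst (k : ℤ) : ℝ := (k : ℝ) ^ 3 - 1 / (k : ℝ)

lemma ost_abs_rpow (x : ℝ) : ((x ^ 2 : ℝ)) ^ ((3:ℝ)/4) = |x| ^ ((3:ℝ)/2) := by
  rw [← sq_abs, ← Real.rpow_natCast |x| 2, ← Real.rpow_mul (abs_nonneg x)]
  norm_num

/-- Pointwise bound: `log(2+y)/(1+y) ≤ 16/(1+m²)^{3/4}` when `1+m² ≤ 2(1+y)`. -/
lemma ost_ptwise {y m : ℝ} (hy : 0 ≤ y) (h : 1 + m ^ 2 ≤ 2 * (1 + y)) :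
    Real.log (2 + y) / (1 + y) ≤ 16 / (1 + m ^ 2) ^ ((3:ℝ)/4) := by
  have hu : (1:ℝ) ≤ 1 + y := by linarith
  have hupos : (0:ℝ) < 1 + y := by linarith
  have hw : (1:ℝ) ≤ 1 + m ^ 2 := by nlinarith [sq_nonneg m]
  have hwpos : (0:ℝ) < 1 + m ^ 2 := by linarith
  have hlog : Real.log (2 + y) ≤ 8 * (1 + y) ^ ((1:ℝ)/4) := by
    have h2y : (0:ℝ) < 2 + y := by linarith
    have h1 : Real.log (2 + y) = 4 * Real.log ((2 + y) ^ ((1:ℝ)/4)) := by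
      rw [Real.log_rpow h2y]; ring
    have h2 : Real.log ((2 + y) ^ ((1:ℝ)/4)) ≤ (2 + y) ^ ((1:ℝ)/4) := by
      have := Real.log_le_sub_one_of_pos (Real.rpow_pos_of_pos h2y ((1:ℝ)/4))
      linarith
    have h3 : (2 + y) ^ ((1:ℝ)/4) ≤ (2 * (1 + y)) ^ ((1:ℝ)/4) :=
      Real.rpow_le_rpow (by linarith) (by linarith) (by norm_num)
    have h4 : (2 * (1 + y)) ^ ((1:ℝ)/4) = 2 ^ ((1:ℝ)/4) * (1 + y) ^ ((1:ℝ)/4) :=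
      Real.mul_rpow (by norm_num) (by linarith)
    have h5 : (2:ℝ) ^ ((1:ℝ)/4) ≤ 2 := by
      calc (2:ℝ) ^ ((1:ℝ)/4) ≤ 2 ^ (1:ℝ) :=
            Real.rpow_le_rpow_of_exponent_le (by norm_num) (by norm_num)
        _ = 2 := Real.rpow_one 2
    have h6 : (0:ℝ) ≤ (1 + y) ^ ((1:ℝ)/4) := (Real.rpow_pos_of_pos hupos _).le
    calc Real.log (2 + y) = 4 * Real.log ((2 + y) ^ ((1:ℝ)/4)) := h1
      _ ≤ 4 * ((2 * (1 + y)) ^ ((1:ℝ)/4)) := by linarith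
      _ = 4 * (2 ^ ((1:ℝ)/4) * (1 + y) ^ ((1:ℝ)/4)) := by rw [h4]
      _ ≤ 8 * (1 + y) ^ ((1:ℝ)/4) := by nlinarith
  have hw34pos : (0:ℝ) < (1 + m ^ 2) ^ ((3:ℝ)/4) := Real.rpow_pos_of_pos hwpos _
  rw [div_le_div_iff₀ hupos hw34pos]
  have hw34 : (1 + m ^ 2) ^ ((3:ℝ)/4) ≤ 2 * (1 + y) ^ ((3:ℝ)/4) := by
    have h5 : (2:ℝ) ^ ((3:ℝ)/4) ≤ 2 := by
      calc (2:ℝ) ^ ((3:ℝ)/4) ≤ 2 ^ (1:ℝ) :=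
            Real.rpow_le_rpow_of_exponent_le (by norm_num) (by norm_num)
        _ = 2 := Real.rpow_one 2
    have h34nn : (0:ℝ) ≤ (1 + y) ^ ((3:ℝ)/4) := (Real.rpow_pos_of_pos hupos _).le
    calc (1 + m ^ 2) ^ ((3:ℝ)/4) ≤ (2 * (1 + y)) ^ ((3:ℝ)/4) :=
          Real.rpow_le_rpow (by linarith) h (by norm_num)
      _ = 2 ^ ((3:ℝ)/4) * (1 + y) ^ ((3:ℝ)/4) := Real.mul_rpow (by norm_num) hupos.le
      _ ≤ 2 * (1 + y) ^ ((3:ℝ)/4) := by nlinarith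
  have hlognn : 0 ≤ Real.log (2 + y) := Real.log_nonneg (by linarith)
  have h14 : (0:ℝ) ≤ (1 + y) ^ ((1:ℝ)/4) := (Real.rpow_pos_of_pos hupos _).le
  have hmul : (1 + y) ^ ((1:ℝ)/4) * (1 + y) ^ ((3:ℝ)/4) = 1 + y := by
    rw [← Real.rpow_add hupos]; norm_num
  calc Real.log (2 + y) * (1 + m ^ 2) ^ ((3:ℝ)/4)
      ≤ (8 * (1 + y) ^ ((1:ℝ)/4)) * (2 * (1 + y) ^ ((3:ℝ)/4)) :=
        mul_le_mul hlog hw34 hw34pos.le (by positivity)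
    _ = 16 * ((1 + y) ^ ((1:ℝ)/4) * (1 + y) ^ ((3:ℝ)/4)) := by ring
    _ = 16 * (1 + y) := by rw [hmul]

/-- A quadratic with leading coefficient of absolute value `≥ 3` is bounded below by
`3·min(dist to x₁, dist to x₂)²` for suitable real numbers `x₁, x₂`. -/
lemma ost_quad (a b c : ℝ) (ha : 3 ≤ |a|) :
    ∃ x₁ x₂ : ℝ, ∀ x : ℝ, 3 * min |x - x₁| |x - x₂| ^ 2 ≤ |a * x ^ 2 + b * x + c| := by
  have ha0 : a ≠ 0 := by
    intro h; rw [h] at ha; simp at ha; linarith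
  set h0 : ℝ := -b / (2 * a) with hh0
  set e : ℝ := c - b ^ 2 / (4 * a) with he
  have key : ∀ x : ℝ, a * x ^ 2 + b * x + c = a * (x - h0) ^ 2 + e := by
    intro x; rw [hh0, he]; field_simp; ring
  rcases le_or_gt 0 (a * e) with hae | hae
  · refine ⟨h0, h0, fun x => ?_⟩
    rw [key x, min_self, sq_abs]
    rcases lt_or_gt_of_ne ha0 with han | hap
    · have he0 : e ≤ 0 := by nlinarith
      have haa : a ≤ -3 := by
        have h' := abs_of_neg han; rw [h'] at ha; linarith
      calc 3 * (x - h0) ^ 2 ≤ -(a * (x - h0) ^ 2 + e) := by nlinarith [sq_nonneg (x - h0)]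
        _ ≤ |a * (x - h0) ^ 2 + e| := neg_le_abs _
    · have he0 : 0 ≤ e := by nlinarith
      have haa : 3 ≤ a := by
        have h' := abs_of_pos hap; rw [h'] at ha; linarith
      calc 3 * (x - h0) ^ 2 ≤ a * (x - h0) ^ 2 + e := by nlinarith [sq_nonneg (x - h0)]
        _ ≤ |a * (x - h0) ^ 2 + e| := le_abs_self _
  · have hna : 0 < -e / a := by
      rcases lt_or_gt_of_ne ha0 with han | hap
      · have : 0 < e := by nlinarith
        exact div_pos_of_neg_of_neg (by linarith) han
      · have : e < 0 := by nlinarith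
        exact div_pos (by linarith) hap
    set s : ℝ := Real.sqrt (-e / a) with hs
    have hs2 : s ^ 2 = -e / a := Real.sq_sqrt hna.le
    have hase : a * s ^ 2 = -e := by rw [hs2]; field_simp
    refine ⟨h0 + s, h0 - s, fun x => ?_⟩
    have factored : a * x ^ 2 + b * x + c = a * ((x - (h0 + s)) * (x - (h0 - s))) := by
      rw [key x]; nlinarith [hase]
    rw [factored, abs_mul]
    have hm1 : min |x - (h0 + s)| |x - (h0 - s)| ≤ |x - (h0 + s)| := min_le_left _ _
    have hm2 : min |x - (h0 + s)| |x - (h0 - s)| ≤ |x - (h0 - s)| := min_le_right _ _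
    have hmn : 0 ≤ min |x - (h0 + s)| |x - (h0 - s)| := le_min (abs_nonneg _) (abs_nonneg _)
    have hprod : min |x - (h0 + s)| |x - (h0 - s)| ^ 2 ≤ |(x - (h0 + s)) * (x - (h0 - s))| := by
      rw [abs_mul, sq]; exact mul_le_mul hm1 hm2 hmn (abs_nonneg _)
    have habsnn : 0 ≤ |(x - (h0 + s)) * (x - (h0 - s))| := abs_nonneg _
    calc 3 * min |x - (h0 + s)| |x - (h0 - s)| ^ 2
        ≤ 3 * |(x - (h0 + s)) * (x - (h0 - s))| := by linarith
      _ ≤ |a| * |(x - (h0 + s)) * (x - (h0 - s))| := by nlinarith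

/-- Base summand. -/
noncomputable def ostB (t : ℝ) : ℝ := 1 / (1 + t ^ 2) ^ ((3:ℝ)/4)

lemma ostB_nonneg (t : ℝ) : 0 ≤ ostB t := by unfold ostB; positivity

lemma ost_summable_base : Summable (fun j : ℤ => ostB (j : ℝ)) := by
  have hdom : Summable (fun j : ℤ => 2 * (1 / |(j : ℝ) + 1/2| ^ ((3:ℝ)/2))) :=
    ((Real.summable_one_div_int_add_rpow (1/2) (3/2)).mpr (by norm_num)).mul_left 2
  apply Summable.of_nonneg_of_le (fun j => ostB_nonneg _) _ hdom
  intro j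
  unfold ostB
  have hj0 : ((j : ℝ) + 1/2) ≠ 0 := by
    intro h
    have : (2 * j : ℝ) = -1 := by linarith
    have : (2 * j : ℤ) = -1 := by exact_mod_cast this
    omega
  have hjpos : 0 < |(j : ℝ) + 1/2| := abs_pos.mpr hj0
  have h1 : ((j : ℝ) + 1/2) ^ 2 ≤ 2 * (1 + (j:ℝ) ^ 2) := by nlinarith [sq_nonneg ((j:ℝ) - 1/2)]
  have hwpos : (0:ℝ) < 1 + (j:ℝ) ^ 2 := by positivity
  have h2 : |(j : ℝ) + 1/2| ^ ((3:ℝ)/2) ≤ 2 * (1 + (j:ℝ) ^ 2) ^ ((3:ℝ)/4) := by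
    rw [← ost_abs_rpow]
    have h5 : (2:ℝ) ^ ((3:ℝ)/4) ≤ 2 := by
      calc (2:ℝ) ^ ((3:ℝ)/4) ≤ 2 ^ (1:ℝ) :=
            Real.rpow_le_rpow_of_exponent_le (by norm_num) (by norm_num)
        _ = 2 := Real.rpow_one 2
    have hnn : (0:ℝ) ≤ (1 + (j:ℝ) ^ 2) ^ ((3:ℝ)/4) := (Real.rpow_pos_of_pos hwpos _).le
    calc (((j : ℝ) + 1/2) ^ 2) ^ ((3:ℝ)/4) ≤ (2 * (1 + (j:ℝ) ^ 2)) ^ ((3:ℝ)/4) :=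
          Real.rpow_le_rpow (sq_nonneg _) h1 (by norm_num)
      _ = 2 ^ ((3:ℝ)/4) * (1 + (j:ℝ) ^ 2) ^ ((3:ℝ)/4) := Real.mul_rpow (by norm_num) hwpos.le
      _ ≤ 2 * (1 + (j:ℝ) ^ 2) ^ ((3:ℝ)/4) := by nlinarith
  have habspos : 0 < |(j : ℝ) + 1/2| ^ ((3:ℝ)/2) := Real.rpow_pos_of_pos hjpos _
  have hw34pos : (0:ℝ) < (1 + (j:ℝ) ^ 2) ^ ((3:ℝ)/4) := Real.rpow_pos_of_pos hwpos _
  rw [show (2:ℝ) * (1 / |(j : ℝ) + 1/2| ^ ((3:ℝ)/2)) = 2 / |(j : ℝ) + 1/2| ^ ((3:ℝ)/2) by ring,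
    div_le_div_iff₀ hw34pos habspos]
  nlinarith

/-- The base constant. -/
noncomputable def ostZ : ℝ := ∑' j : ℤ, ostB (j : ℝ)

lemma ostZ_nonneg : 0 ≤ ostZ := tsum_nonneg fun j => ostB_nonneg _

/-- Uniform bound for shifted sums. -/
lemma ost_shifted (x₀ : ℝ) :
    Summable (fun k : ℤ => ostB ((k : ℝ) - x₀)) ∧
      (∑' k : ℤ, ostB ((k : ℝ) - x₀)) ≤ 3 * ostZ := by
  set k₀ : ℤ := round x₀ with hk₀
  have hround : |x₀ - (k₀ : ℝ)| ≤ 1/2 := abs_sub_round x₀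
  have hdom' : Summable (fun k : ℤ => 3 * ostB ((k - k₀ : ℤ) : ℝ)) := by
    have := (Equiv.subRight k₀).summable_iff (f := fun j : ℤ => ostB (j : ℝ))
    exact (this.mpr ost_summable_base).mul_left 3
  have hple : ∀ k : ℤ, ostB ((k : ℝ) - x₀) ≤ 3 * ostB ((k - k₀ : ℤ) : ℝ) := by
    intro k
    unfold ostB
    have hcast : ((k - k₀ : ℤ) : ℝ) = (k : ℝ) - (k₀ : ℝ) := by push_cast; ring
    rw [hcast]
    set d : ℝ := (k : ℝ) - x₀ with hd
    set j : ℝ := (k : ℝ) - (k₀ : ℝ) with hj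
    have hδ : |j - d| ≤ 1/2 := by
      have : j - d = x₀ - (k₀ : ℝ) := by rw [hj, hd]; ring
      rw [this]; exact hround
    have h1 : 1 + j ^ 2 ≤ 4 * (1 + d ^ 2) := by
      have := abs_le.mp hδ
      nlinarith [sq_nonneg (j - 2*d)]
    have hdpos : (0:ℝ) < 1 + d ^ 2 := by positivity
    have hjpos : (0:ℝ) < 1 + j ^ 2 := by positivity
    have h2 : (1 + j ^ 2) ^ ((3:ℝ)/4) ≤ 3 * (1 + d ^ 2) ^ ((3:ℝ)/4) := by
      have h434 : (4:ℝ) ^ ((3:ℝ)/4) ≤ 3 := by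
        have hpow : ((4:ℝ) ^ ((3:ℝ)/4)) ^ (4:ℕ) = 4 ^ (3:ℕ) := by
          rw [← Real.rpow_natCast ((4:ℝ) ^ ((3:ℝ)/4)) 4, ← Real.rpow_mul (by norm_num)]
          norm_num
        have h3 : ((4:ℝ) ^ ((3:ℝ)/4)) ^ (4:ℕ) ≤ 3 ^ (4:ℕ) := by rw [hpow]; norm_num
        exact le_of_pow_le_pow_left₀ (by norm_num) (by norm_num) h3
      have hnn : (0:ℝ) ≤ (1 + d ^ 2) ^ ((3:ℝ)/4) := (Real.rpow_pos_of_pos hdpos _).le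
      calc (1 + j ^ 2) ^ ((3:ℝ)/4) ≤ (4 * (1 + d ^ 2)) ^ ((3:ℝ)/4) :=
            Real.rpow_le_rpow hjpos.le h1 (by norm_num)
        _ = 4 ^ ((3:ℝ)/4) * (1 + d ^ 2) ^ ((3:ℝ)/4) := Real.mul_rpow (by norm_num) hdpos.le
        _ ≤ 3 * (1 + d ^ 2) ^ ((3:ℝ)/4) := by nlinarith
    have hd34pos : (0:ℝ) < (1 + d ^ 2) ^ ((3:ℝ)/4) := Real.rpow_pos_of_pos hdpos _
    have hj34pos : (0:ℝ) < (1 + j ^ 2) ^ ((3:ℝ)/4) := Real.rpow_pos_of_pos hjpos _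
    rw [show (3:ℝ) * (1 / (1 + j ^ 2) ^ ((3:ℝ)/4)) = 3 / (1 + j ^ 2) ^ ((3:ℝ)/4) by ring,
      div_le_div_iff₀ hd34pos hj34pos]
    linarith
  have hsum : Summable (fun k : ℤ => ostB ((k : ℝ) - x₀)) :=
    Summable.of_nonneg_of_le (fun k => ostB_nonneg _) hple hdom'
  refine ⟨hsum, ?_⟩
  calc (∑' k : ℤ, ostB ((k : ℝ) - x₀)) ≤ ∑' k : ℤ, 3 * ostB ((k - k₀ : ℤ) : ℝ) :=
        Summable.tsum_le_tsum hple hsum hdom'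
    _ = 3 * ∑' k : ℤ, ostB ((k - k₀ : ℤ) : ℝ) := tsum_mul_left
    _ = 3 * ostZ := by
        rw [show (∑' k : ℤ, ostB ((k - k₀ : ℤ) : ℝ)) = ostZ from
          (Equiv.subRight k₀).tsum_eq (fun j : ℤ => ostB (j : ℝ))]

theorem ostrovsky_log_sum_one :
    ∃ C : ℝ, 0 < C ∧ ∀ (τ : ℝ) (n : ℤ), n ≠ 0 →
      ∑' n₁ : {n₁ : ℤ // n₁ ≠ 0 ∧ n₁ ≠ n},
        Real.log (2 + |τ + mOst (n₁ : ℤ) + mOst (n - (n₁ : ℤ))|) /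
          (1 + |τ + mOst (n₁ : ℤ) + mOst (n - (n₁ : ℤ))|) ≤ C := by
  refine ⟨96 * ostZ + 1, by linarith [ostZ_nonneg], fun τ n hn => ?_⟩
  have hn1 : (1:ℝ) ≤ |(n:ℝ)| := by exact_mod_cast Int.one_le_abs hn
  obtain ⟨x₁, x₂, hquad⟩ := ost_quad (3*(n:ℝ)) (-3*(n:ℝ)^2) (τ + (n:ℝ)^3)
    (by rw [abs_mul]; rw [abs_of_pos (by norm_num : (0:ℝ) < 3)]; nlinarith)
  set G : ℤ → ℝ := fun k => 16 * ostB ((k:ℝ) - x₁) + 16 * ostB ((k:ℝ) - x₂) with hG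
  have hGsum : Summable G := ((ost_shifted x₁).1.mul_left 16).add ((ost_shifted x₂).1.mul_left 16)
  have hG0 : ∀ k, 0 ≤ G k := fun k =>
    add_nonneg (mul_nonneg (by norm_num) (ostB_nonneg _))
      (mul_nonneg (by norm_num) (ostB_nonneg _))
  have key : ∀ s : {n₁ : ℤ // n₁ ≠ 0 ∧ n₁ ≠ n},
      Real.log (2 + |τ + mOst (s : ℤ) + mOst (n - (s : ℤ))|) /
        (1 + |τ + mOst (s : ℤ) + mOst (n - (s : ℤ))|) ≤ G (s : ℤ) := by
    rintro ⟨k, hk0, hkn⟩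
    simp only
    set y : ℝ := |τ + mOst k + mOst (n - k)| with hy
    set d₁ : ℝ := |(k:ℝ) - x₁| with hd₁
    set d₂ : ℝ := |(k:ℝ) - x₂| with hd₂
    set m : ℝ := min d₁ d₂ with hm
    have hk1 : (1:ℝ) ≤ |(k:ℝ)| := by exact_mod_cast Int.one_le_abs hk0
    have hnk0 : n - k ≠ 0 := sub_ne_zero.mpr (Ne.symm hkn)
    have hnk1 : (1:ℝ) ≤ |(n:ℝ) - (k:ℝ)| := by
      have : (1:ℝ) ≤ |((n - k : ℤ) : ℝ)| := by exact_mod_cast Int.one_le_abs hnk0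
      rwa [Int.cast_sub] at this
    have hdecomp : τ + mOst k + mOst (n - k)
        = (3*(n:ℝ) * (k:ℝ)^2 + (-3*(n:ℝ)^2) * (k:ℝ) + (τ + (n:ℝ)^3))
          - (1/(k:ℝ) + 1/((n:ℝ) - (k:ℝ))) := by
      unfold mOst; push_cast; ring
    have hr : |1/(k:ℝ) + 1/((n:ℝ)-(k:ℝ))| ≤ 2 := by
      have h1 : |1/(k:ℝ)| ≤ 1 := by
        rw [abs_div, abs_one]
        exact div_le_one_of_le₀ hk1 (abs_nonneg _)
      have h2 : |1/((n:ℝ)-(k:ℝ))| ≤ 1 := by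
        rw [abs_div, abs_one]
        exact div_le_one_of_le₀ hnk1 (abs_nonneg _)
      calc |1/(k:ℝ) + 1/((n:ℝ)-(k:ℝ))| ≤ |1/(k:ℝ)| + |1/((n:ℝ)-(k:ℝ))| := abs_add_le _ _
        _ ≤ 2 := by linarith
    have hq := hquad (k:ℝ)
    have hy3 : 3 * m ^ 2 - 2 ≤ y := by
      have habs : |3*(n:ℝ) * (k:ℝ)^2 + (-3*(n:ℝ)^2) * (k:ℝ) + (τ + (n:ℝ)^3)|
          - |1/(k:ℝ) + 1/((n:ℝ)-(k:ℝ))| ≤ y := by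
        rw [hy, hdecomp]
        exact abs_sub_abs_le_abs_sub _ _
      linarith
    have hyn : 0 ≤ y := abs_nonneg _
    have hcond : 1 + m ^ 2 ≤ 2 * (1 + y) := by
      rcases le_or_gt (m ^ 2) 1 with h | h
      · nlinarith
      · nlinarith
    refine (ost_ptwise hyn hcond).trans ?_
    have hGk : G k = 16 * ostB ((k:ℝ) - x₁) + 16 * ostB ((k:ℝ) - x₂) := rfl
    rcases min_cases d₁ d₂ with ⟨hmin, -⟩ | ⟨hmin, -⟩ <;>
      rw [hGk] <;> unfold ostB
    · have hsq : m ^ 2 = ((k:ℝ) - x₁) ^ 2 := by rw [hm, hmin, hd₁, sq_abs]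
      rw [hsq]
      have := ostB_nonneg ((k:ℝ) - x₂)
      unfold ostB at this
      have hpos : (0:ℝ) < (1 + ((k:ℝ) - x₁) ^ 2) ^ ((3:ℝ)/4) :=
        Real.rpow_pos_of_pos (by positivity) _
      rw [div_eq_mul_one_div 16]
      nlinarith
    · have hsq : m ^ 2 = ((k:ℝ) - x₂) ^ 2 := by rw [hm, hmin, hd₂, sq_abs]
      rw [hsq]
      have := ostB_nonneg ((k:ℝ) - x₁)
      unfold ostB at this
      have hpos : (0:ℝ) < (1 + ((k:ℝ) - x₂) ^ 2) ^ ((3:ℝ)/4) :=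
        Real.rpow_pos_of_pos (by positivity) _
      rw [div_eq_mul_one_div 16]
      nlinarith
  have hf0 : ∀ s : {n₁ : ℤ // n₁ ≠ 0 ∧ n₁ ≠ n},
      0 ≤ Real.log (2 + |τ + mOst (s : ℤ) + mOst (n - (s : ℤ))|) /
        (1 + |τ + mOst (s : ℤ) + mOst (n - (s : ℤ))|) := fun s =>
    div_nonneg (Real.log_nonneg (by linarith [abs_nonneg (τ + mOst (s : ℤ) + mOst (n - (s : ℤ)))]))
      (by linarith [abs_nonneg (τ + mOst (s : ℤ) + mOst (n - (s : ℤ)))])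
  have hGsub : Summable (fun s : {n₁ : ℤ // n₁ ≠ 0 ∧ n₁ ≠ n} => G (s : ℤ)) :=
    hGsum.subtype {n₁ : ℤ | n₁ ≠ 0 ∧ n₁ ≠ n}
  have hfs : Summable (fun s : {n₁ : ℤ // n₁ ≠ 0 ∧ n₁ ≠ n} =>
      Real.log (2 + |τ + mOst (s : ℤ) + mOst (n - (s : ℤ))|) /
        (1 + |τ + mOst (s : ℤ) + mOst (n - (s : ℤ))|)) :=
    Summable.of_nonneg_of_le hf0 key hGsub
  calc ∑' n₁ : {n₁ : ℤ // n₁ ≠ 0 ∧ n₁ ≠ n},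
        Real.log (2 + |τ + mOst (n₁ : ℤ) + mOst (n - (n₁ : ℤ))|) /
          (1 + |τ + mOst (n₁ : ℤ) + mOst (n - (n₁ : ℤ))|)
      ≤ ∑' s : {n₁ : ℤ // n₁ ≠ 0 ∧ n₁ ≠ n}, G (s : ℤ) := Summable.tsum_le_tsum key hfs hGsub
    _ ≤ ∑' k : ℤ, G k := Summable.tsum_subtype_le G {n₁ : ℤ | n₁ ≠ 0 ∧ n₁ ≠ n} hG0 hGsum
    _ = 16 * (∑' k : ℤ, ostB ((k:ℝ) - x₁)) + 16 * (∑' k : ℤ, ostB ((k:ℝ) - x₂)) := by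
        rw [hG, Summable.tsum_add ((ost_shifted x₁).1.mul_left 16) ((ost_shifted x₂).1.mul_left 16),
          tsum_mul_left, tsum_mul_left]
    _ ≤ 96 * ostZ := by linarith [(ost_shifted x₁).2, (ost_shifted x₂).2, ostZ_nonneg]
    _ ≤ 96 * ostZ + 1 := by linarith
end

section
/- For every ρ > 2/3 there exists C > 0 such that for every τ₁ ∈ ℝ and every nonzero integer n₁, ∑_{n ∈ ℤ, n ≠ 0, n ≠ n₁} log(1 + |τ₁ + m(n₁) - m(n - n₁)|) / (1 + |τ₁ + m(n₁) - m(n - n₁)|)^ρ ≤ C. -/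
lemma mOst_neg (k : ℤ) : mOst (-k) = - mOst k := by
  simp [mOst]; ring

lemma key_pos (τ : ℝ) (hτ : 0 ≤ τ) (k₀ : ℤ) (hk₀ : 1 ≤ k₀)
    (h1 : ((k₀ : ℝ) - 1) ^ 3 ≤ τ) (h2 : τ ≤ (k₀ : ℝ) ^ 3)
    (k : ℤ) (hk : k ≠ 0) :
    ((max (|(|k| - k₀)| - 1) 0 : ℤ) : ℝ) ^ 3 ≤ |τ - mOst k| := by
  have ha1 : (1 : ℝ) ≤ (k₀ : ℝ) := by exact_mod_cast hk₀
  rcases hk.lt_or_gt with hkneg | hkpos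
  · -- k ≤ -1
    have hk1 : k ≤ -1 := by omega
    have habs : |k| = -k := abs_of_neg hkneg
    set b : ℤ := -k with hb
    have hb1 : 1 ≤ b := by omega
    have hbr : (1 : ℝ) ≤ (b : ℝ) := by exact_mod_cast hb1
    have hb3 : (1 : ℝ) ≤ (b : ℝ) ^ 3 := by
      nlinarith [mul_nonneg (sub_nonneg.2 hbr) (sq_nonneg (b : ℝ)),
        mul_nonneg (sub_nonneg.2 hbr) (by linarith : (0:ℝ) ≤ (b:ℝ))]
    have hinv : 1 / (b : ℝ) ≤ 1 := by
      rw [div_le_one (by linarith)]; linarith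
    have hinv0 : 0 < 1 / (b : ℝ) := by positivity
    have hm : mOst k = -((b : ℝ) ^ 3 - 1 / (b : ℝ)) := by
      rw [show k = -b by omega, mOst_neg, mOst]
    have hval : τ - mOst k = τ + ((b : ℝ) ^ 3 - 1 / (b : ℝ)) := by rw [hm]; ring
    have hRnn : 0 ≤ τ + ((b : ℝ) ^ 3 - 1 / (b : ℝ)) := by linarith
    rw [hval, abs_of_nonneg hRnn, habs]
    rcases le_or_gt b k₀ with hble | hbgt
    · -- b ≤ k₀
      have hE : |b - k₀| - 1 = k₀ - b - 1 := by
        rw [abs_of_nonpos (by omega)]; ring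
      rw [hE]
      rcases le_or_gt (k₀ - b - 1) 0 with h0 | h0
      · rw [max_eq_right h0]
        have : (((0:ℤ)):ℝ) ^ 3 = 0 := by norm_num
        rw [this]; linarith
      · rw [max_eq_left h0.le]
        have hcast : ((k₀ - b - 1 : ℤ) : ℝ) = (k₀ : ℝ) - b - 1 := by push_cast; ring
        rw [hcast]
        have e1 : ((k₀ : ℝ) - b - 1) ^ 3 ≤ ((k₀ : ℝ) - 1) ^ 3 := by
          apply pow_le_pow_left₀ (by exact_mod_cast h0.le) (by linarith)
        linarith
    · -- b > k₀
      have hE : |b - k₀| - 1 = b - k₀ - 1 := by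
        rw [abs_of_pos (by omega)]
      rw [hE]
      rcases le_or_gt (b - k₀ - 1) 0 with h0 | h0
      · rw [max_eq_right h0]
        have : (((0:ℤ)):ℝ) ^ 3 = 0 := by norm_num
        rw [this]; linarith
      · rw [max_eq_left h0.le]
        have hcast : ((b - k₀ - 1 : ℤ) : ℝ) = (b : ℝ) - k₀ - 1 := by push_cast; ring
        rw [hcast]
        have hbig : (3 : ℝ) ≤ (b : ℝ) := by
          have : (3:ℤ) ≤ b := by omega
          exact_mod_cast this
        have e1 : ((b : ℝ) - k₀ - 1) ^ 3 ≤ ((b : ℝ) - 2) ^ 3 := by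
          apply pow_le_pow_left₀ (by exact_mod_cast h0.le) (by linarith)
        have hprod : 0 ≤ 6 * (b : ℝ) * ((b : ℝ) - 2) :=
          mul_nonneg (by linarith) (by linarith)
        have e2 : ((b : ℝ) - 2) ^ 3 ≤ (b : ℝ) ^ 3 - 1 := by nlinarith
        linarith
  · -- k ≥ 1
    have hk1 : 1 ≤ k := hkpos
    have hc : (1 : ℝ) ≤ (k : ℝ) := by exact_mod_cast hk1
    have habs : |k| = k := abs_of_pos hkpos
    have hinv : 1 / (k : ℝ) ≤ 1 := by rw [div_le_one (by linarith)]; linarith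
    have hinv0 : 0 < 1 / (k : ℝ) := by positivity
    rw [habs, mOst]
    rcases lt_trichotomy k k₀ with hlt | heq | hgt
    · -- k < k₀
      have hE : |k - k₀| - 1 = k₀ - k - 1 := by rw [abs_of_neg (by omega)]; ring
      rw [hE]
      have hck : (k : ℝ) ≤ (k₀ : ℝ) - 1 := by
        have h' : k ≤ k₀ - 1 := by omega
        have h'' : ((k:ℤ):ℝ) ≤ ((k₀ - 1 : ℤ) : ℝ) := by exact_mod_cast h'
        push_cast at h''; linarith
      have hk3 : (k : ℝ) ^ 3 ≤ ((k₀ : ℝ) - 1) ^ 3 :=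
        pow_le_pow_left₀ (by linarith) hck 3
      have hlow : ((max (k₀ - k - 1) 0 : ℤ) : ℝ) ^ 3 ≤ τ - ((k : ℝ) ^ 3 - 1 / (k : ℝ)) := by
        rcases le_or_gt (k₀ - k - 1) 0 with h0 | h0
        · rw [max_eq_right h0]
          have : (((0:ℤ)):ℝ) ^ 3 = 0 := by norm_num
          rw [this]; linarith
        · rw [max_eq_left h0.le]
          have hcast : ((k₀ - k - 1 : ℤ) : ℝ) = (k₀ : ℝ) - k - 1 := by push_cast; ring
          rw [hcast]
          have hident : ((k₀:ℝ) - 1) ^ 3 - (k:ℝ) ^ 3 - ((k₀:ℝ) - 1 - (k:ℝ)) ^ 3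
              = 3 * ((k₀:ℝ) - 1) * (k:ℝ) * (((k₀:ℝ) - 1) - (k:ℝ)) := by ring
          have hp : 0 ≤ 3 * ((k₀:ℝ) - 1) * (k:ℝ) * (((k₀:ℝ) - 1) - (k:ℝ)) := by
            apply mul_nonneg
            apply mul_nonneg
            apply mul_nonneg <;> linarith
            all_goals linarith
          have : ((k₀:ℝ) - k - 1) ^ 3 = ((k₀:ℝ) - 1 - (k:ℝ)) ^ 3 := by ring
          rw [this]; linarith
      exact hlow.trans (le_abs_self _)
    · -- k = k₀
      subst heq
      simp
    · -- k > k₀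
      have hE : |k - k₀| - 1 = k - k₀ - 1 := by rw [abs_of_pos (by omega)]
      rw [hE, max_eq_left (by omega)]
      have hcast : ((k - k₀ - 1 : ℤ) : ℝ) = (k : ℝ) - k₀ - 1 := by push_cast; ring
      rw [hcast]
      have hck : (k₀ : ℝ) + 1 ≤ (k : ℝ) := by
        have h' : k₀ + 1 ≤ k := by omega
        have h'' : ((k₀ + 1 : ℤ):ℝ) ≤ ((k : ℤ) : ℝ) := by exact_mod_cast h'
        push_cast at h''; linarith
      have hident : (k:ℝ)^3 - (k₀:ℝ)^3 - 1 - ((k:ℝ) - k₀ - 1)^3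
          = 3 * ((k:ℝ) - k₀) * ((k₀:ℝ)^2 - 1) + 3 * (k₀:ℝ) * ((k:ℝ) - k₀)^2
            + 3 * ((k:ℝ) - k₀)^2 - 3 * ((k:ℝ) - k₀) + 3 * ((k:ℝ) - k₀) := by ring
      have hp1 : 0 ≤ 3 * ((k:ℝ) - k₀) * ((k₀:ℝ)^2 - 1) := by
        apply mul_nonneg (by linarith)
        nlinarith
      have hp2 : 0 ≤ 3 * (k₀:ℝ) * ((k:ℝ) - k₀)^2 := by positivity
      have hp3 : 0 ≤ ((k:ℝ) - k₀)^2 := sq_nonneg _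
      have hlow : ((k : ℝ) - k₀ - 1) ^ 3 ≤ ((k : ℝ) ^ 3 - 1 / (k : ℝ)) - τ := by
        nlinarith
      calc ((k : ℝ) - k₀ - 1) ^ 3 ≤ -(τ - ((k : ℝ) ^ 3 - 1 / (k : ℝ))) := by linarith
        _ ≤ |τ - ((k : ℝ) ^ 3 - 1 / (k : ℝ))| := neg_le_abs _

lemma key_gen (τ : ℝ) (k₀ : ℤ) (hk₀ : 1 ≤ k₀)
    (h1 : ((k₀ : ℝ) - 1) ^ 3 ≤ |τ|) (h2 : |τ| ≤ (k₀ : ℝ) ^ 3)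
    (k : ℤ) (hk : k ≠ 0) :
    ((max (|(|k| - k₀)| - 1) 0 : ℤ) : ℝ) ^ 3 ≤ |τ - mOst k| := by
  rcases le_or_gt 0 τ with hτ | hτ
  · rw [abs_of_nonneg hτ] at h1 h2
    exact key_pos τ hτ k₀ hk₀ h1 h2 k hk
  · rw [abs_of_neg hτ] at h1 h2
    have h := key_pos (-τ) (by linarith) k₀ hk₀ h1 h2 (-k) (by simpa using hk)
    rw [abs_neg] at h
    have : |(-τ) - mOst (-k)| = |τ - mOst k| := by
      rw [mOst_neg]
      rw [show -τ - -mOst k = -(τ - mOst k) by ring, abs_neg]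
    rwa [this] at h

open Real in
lemma F_le (ρ : ℝ) (hρ : 0 < ρ) (x : ℝ) :
    Real.log (1 + |x|) / (1 + |x|) ^ ρ ≤ (2 / ρ) * (1 + |x|) ^ (-(ρ / 2)) := by
  set y : ℝ := 1 + |x| with hy
  have hy1 : (1 : ℝ) ≤ y := le_add_of_nonneg_right (abs_nonneg x)
  have hy0 : (0 : ℝ) < y := by linarith
  have hlog : Real.log y ≤ (2 / ρ) * y ^ (ρ / 2) := by
    have h1 : Real.log (y ^ (ρ / 2)) ≤ y ^ (ρ / 2) - 1 :=
      Real.log_le_sub_one_of_pos (rpow_pos_of_pos hy0 _)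
    rw [Real.log_rpow hy0] at h1
    have h2 : Real.log y = (2 / ρ) * ((ρ / 2) * Real.log y) := by
      field_simp
    rw [h2]
    have : (ρ / 2) * Real.log y ≤ y ^ (ρ / 2) := by linarith
    have h3 : 0 ≤ 2 / ρ := by positivity
    exact mul_le_mul_of_nonneg_left this h3
  have hden : (0:ℝ) < y ^ ρ := rpow_pos_of_pos hy0 _
  calc Real.log y / y ^ ρ ≤ ((2 / ρ) * y ^ (ρ / 2)) / y ^ ρ := by
        gcongr
    _ = (2 / ρ) * (y ^ (ρ / 2) / y ^ ρ) := by ring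
    _ = (2 / ρ) * y ^ (ρ / 2 - ρ) := by rw [← Real.rpow_sub hy0]
    _ = (2 / ρ) * y ^ (-(ρ / 2)) := by ring_nf

open Real in
lemma base_cmp (ρ s : ℝ) (hρ : 0 < ρ) (hs : s = 3 * ρ / 2) (x e w : ℝ)
    (he : 0 ≤ e) (hcube : e ^ 3 ≤ |x|) (hw0 : 0 ≤ w) (hw : 1 + w ≤ 2 * (1 + e)) :
    (1 + |x|) ^ (-(ρ / 2)) ≤ 4 ^ s * (1 + w) ^ (-s) := by
  have hs0 : 0 < s := by rw [hs]; positivity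
  set B : ℝ := 1 + |x| with hB
  have hB1 : (1:ℝ) ≤ B := le_add_of_nonneg_right (abs_nonneg x)
  have hB0 : (0:ℝ) < B := by linarith
  set A : ℝ := 1 + w with hA
  have hA1 : (1:ℝ) ≤ A := by rw [hA]; linarith
  have hA0 : (0:ℝ) < A := by linarith
  -- (1+e) ≤ 2 * (1+e^3)^(1/3)
  have hcube0 : (0:ℝ) < 1 + e ^ 3 := by positivity
  have hr : ((1 + e ^ 3) ^ ((3:ℝ)⁻¹)) ^ (3:ℕ) = 1 + e ^ 3 := by
    rw [show ((3:ℝ)⁻¹) = (((3:ℕ):ℝ))⁻¹ by norm_num]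
    exact Real.rpow_inv_natCast_pow hcube0.le (by norm_num)
  have hroot0 : 0 ≤ (1 + e ^ 3) ^ ((3:ℝ)⁻¹) := rpow_nonneg hcube0.le _
  have h1e : 1 + e ≤ 2 * (1 + e ^ 3) ^ ((3:ℝ)⁻¹) := by
    apply le_of_pow_le_pow_left₀ (n := 3) (by norm_num) (by positivity)
    rw [mul_pow, hr]
    nlinarith [sq_nonneg (e - 1), sq_nonneg e, sq_nonneg (e + 1)]
  have hmono : (1 + e ^ 3) ^ ((3:ℝ)⁻¹) ≤ B ^ ((3:ℝ)⁻¹) := by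
    apply Real.rpow_le_rpow hcube0.le (by rw [hB]; linarith) (by norm_num)
  have hA4 : A ≤ 4 * B ^ ((3:ℝ)⁻¹) := by
    calc A ≤ 2 * (1 + e) := by linarith
      _ ≤ 4 * (1 + e ^ 3) ^ ((3:ℝ)⁻¹) := by linarith
      _ ≤ 4 * B ^ ((3:ℝ)⁻¹) := by linarith
  -- raise to power s
  have hAs : A ^ s ≤ 4 ^ s * B ^ (ρ / 2) := by
    calc A ^ s ≤ (4 * B ^ ((3:ℝ)⁻¹)) ^ s :=
          Real.rpow_le_rpow hA0.le hA4 hs0.le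
      _ = 4 ^ s * (B ^ ((3:ℝ)⁻¹)) ^ s := by
          rw [Real.mul_rpow (by norm_num) (rpow_nonneg hB0.le _)]
      _ = 4 ^ s * B ^ (ρ / 2) := by
          rw [← Real.rpow_mul hB0.le]
          congr 1
          rw [hs]; ring
  have hBp : (0:ℝ) < B ^ (ρ / 2) := Real.rpow_pos_of_pos hB0 _
  have hAp : (0:ℝ) < A ^ s := Real.rpow_pos_of_pos hA0 _
  rw [Real.rpow_neg hB0.le, Real.rpow_neg hA0.le, inv_eq_one_div, inv_eq_one_div,
    mul_one_div, div_le_div_iff₀ hBp hAp, one_mul]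
  linarith

theorem ostrovsky_log_sum_rho (ρ : ℝ) (hρ : 2 / 3 < ρ) :
    ∃ C : ℝ, 0 < C ∧ ∀ (τ₁ : ℝ) (n₁ : ℤ), n₁ ≠ 0 →
      ∑' n : {n : ℤ // n ≠ 0 ∧ n ≠ n₁},
        Real.log (1 + |τ₁ + mOst n₁ - mOst ((n : ℤ) - n₁)|) /
          (1 + |τ₁ + mOst n₁ - mOst ((n : ℤ) - n₁)|) ^ ρ ≤ C := by
  have hρ0 : 0 < ρ := by linarith [show (0:ℝ) < 2/3 by norm_num]
  set s : ℝ := 3 * ρ / 2 with hs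
  have hs1 : 1 < s := by rw [hs]; linarith
  have hs0 : 0 < s := by linarith
  -- the majorant
  set H : ℤ → ℝ := fun j => (1 + |(j : ℝ)|) ^ (-s) with hH'
  have hHnn : ∀ j, 0 ≤ H j := fun j => Real.rpow_nonneg (by positivity) _
  have hHnat : Summable fun n : ℕ => H n := by
    have h0 : Summable fun n : ℕ => ((n : ℝ)) ^ (-s) :=
      Real.summable_nat_rpow.2 (by linarith)
    have h1 : Summable fun n : ℕ => (((n + 1 : ℕ) : ℝ)) ^ (-s) :=
      (summable_nat_add_iff 1).2 h0
    apply h1.congr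
    intro n
    have : (((n + 1 : ℕ) : ℝ)) = 1 + |((n : ℤ) : ℝ)| := by
      push_cast
      rw [abs_of_nonneg (by positivity)]
      ring
    rw [hH', this]
  have hH : Summable H := by
    apply Summable.of_nat_of_neg hHnat
    apply hHnat.congr
    intro n
    simp [hH']
  set T : ℝ := ∑' j, H j with hT'
  have hT0 : 0 < T := by
    apply Summable.tsum_pos hH hHnn 0
    rw [hH']
    simp
  set K : ℝ := (2 / ρ) * 4 ^ s with hK'
  have hK0 : 0 < K := by
    apply mul_pos (by positivity)
    exact Real.rpow_pos_of_pos (by norm_num) _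
  refine ⟨K * (2 * T), by positivity, ?_⟩
  intro τ₁ n₁ hn₁
  set τ : ℝ := τ₁ + mOst n₁ with hτ'
  -- choose k₀
  set r : ℝ := |τ| ^ ((3:ℝ)⁻¹) with hr'
  have hr0 : 0 ≤ r := Real.rpow_nonneg (abs_nonneg _) _
  set k₀ : ℤ := ⌊r⌋ + 1 with hk₀'
  have hfl0 : 0 ≤ ⌊r⌋ := Int.floor_nonneg.2 hr0
  have hk₀1 : 1 ≤ k₀ := by omega
  have hr3 : r ^ (3:ℕ) = |τ| := by
    rw [hr', show ((3:ℝ)⁻¹) = (((3:ℕ):ℝ))⁻¹ by norm_num]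
    exact Real.rpow_inv_natCast_pow (abs_nonneg _) (by norm_num)
  have h1 : ((k₀ : ℝ) - 1) ^ 3 ≤ |τ| := by
    have h : ((k₀ : ℝ) - 1) = (⌊r⌋ : ℝ) := by push_cast [hk₀']; ring
    rw [h, ← hr3]
    exact pow_le_pow_left₀ (by exact_mod_cast hfl0) (Int.floor_le r) 3
  have h2 : |τ| ≤ (k₀ : ℝ) ^ 3 := by
    rw [← hr3]
    apply pow_le_pow_left₀ hr0
    have := Int.lt_floor_add_one r
    push_cast [hk₀']
    push_cast at this
    linarith
  -- the bound per index
  apply tsum_le_of_sum_le' (by positivity)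
  intro S
  have hterm : ∀ n : {n : ℤ // n ≠ 0 ∧ n ≠ n₁},
      Real.log (1 + |τ₁ + mOst n₁ - mOst ((n : ℤ) - n₁)|) /
          (1 + |τ₁ + mOst n₁ - mOst ((n : ℤ) - n₁)|) ^ ρ
        ≤ K * (H ((n : ℤ) - n₁ - k₀) + H (-k₀ - ((n : ℤ) - n₁))) := by
    intro n
    set k : ℤ := (n : ℤ) - n₁ with hkdef
    have hk : k ≠ 0 := sub_ne_zero.2 n.2.2
    have hx : τ₁ + mOst n₁ - mOst k = τ - mOst k := by rw [hτ']
    rw [hx]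
    set x : ℝ := τ - mOst k with hxdef
    set E : ℤ := max (|(|k| - k₀)| - 1) 0 with hE'
    have hkey : ((E : ℤ) : ℝ) ^ 3 ≤ |x| := key_gen τ k₀ hk₀1 h1 h2 k hk
    have hEnn : (0 : ℝ) ≤ (E : ℝ) := by
      have : (0:ℤ) ≤ E := le_max_right _ _
      exact_mod_cast this
    set w : ℤ := |(|k| - k₀)| with hw'
    have hw0 : (0:ℝ) ≤ (w : ℝ) := by
      have : (0:ℤ) ≤ w := abs_nonneg _
      exact_mod_cast this
    have hwE : 1 + (w : ℝ) ≤ 2 * (1 + (E : ℝ)) := by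
      have : w ≤ 1 + 2 * E := by
        rw [hE']
        rcases le_or_gt w 0 with h | h
        · omega
        · omega
      have hc : (w : ℝ) ≤ 1 + 2 * (E : ℝ) := by exact_mod_cast this
      linarith
    calc Real.log (1 + |x|) / (1 + |x|) ^ ρ
        ≤ (2 / ρ) * (1 + |x|) ^ (-(ρ / 2)) := F_le ρ hρ0 x
      _ ≤ (2 / ρ) * (4 ^ s * (1 + (w:ℝ)) ^ (-s)) := by
          apply mul_le_mul_of_nonneg_left _ (by positivity)
          exact base_cmp ρ s hρ0 hs (x) (E:ℝ) (w:ℝ) hEnn hkey hw0 hwE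
      _ = K * (1 + (w:ℝ)) ^ (-s) := by rw [hK']; ring
      _ ≤ K * (H (k - k₀) + H (-k₀ - k)) := by
          apply mul_le_mul_of_nonneg_left _ hK0.le
          have hcastw : ((w:ℤ):ℝ) = |((|k| - k₀ : ℤ) : ℝ)| := by
            rw [hw']; push_cast; ring
          have hsplit : (1 + (w:ℝ)) ^ (-s) = H (|k| - k₀) := by
            simp only [hH']
            rw [hcastw]
          rw [hsplit]
          rcases le_or_gt 0 k with hk0 | hk0
          · have : |k| = k := abs_of_nonneg hk0
            rw [this]
            exact le_add_of_nonneg_right (hHnn _)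
          · have h1 : |k| = -k := abs_of_neg hk0
            have h2 : -k - k₀ = -k₀ - k := by ring
            rw [h1, h2]
            exact le_add_of_nonneg_left (hHnn _)
  calc ∑ n ∈ S, Real.log (1 + |τ₁ + mOst n₁ - mOst ((n : ℤ) - n₁)|) /
          (1 + |τ₁ + mOst n₁ - mOst ((n : ℤ) - n₁)|) ^ ρ
      ≤ ∑ n ∈ S, K * (H ((n : ℤ) - n₁ - k₀) + H (-k₀ - ((n : ℤ) - n₁))) :=
        Finset.sum_le_sum fun n _ => hterm n
    _ = K * ((∑ n ∈ S, H ((n : ℤ) - n₁ - k₀)) + ∑ n ∈ S, H (-k₀ - ((n : ℤ) - n₁))) := by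
        rw [← Finset.sum_add_distrib, Finset.mul_sum]
    _ ≤ K * (T + T) := by
        apply mul_le_mul_of_nonneg_left _ hK0.le
        have inj1 : Function.Injective
            (fun n : {n : ℤ // n ≠ 0 ∧ n ≠ n₁} => (n : ℤ) - n₁ - k₀) := by
          intro a b hab
          simp only [sub_left_inj] at hab
          exact Subtype.coe_injective hab
        have inj2 : Function.Injective
            (fun n : {n : ℤ // n ≠ 0 ∧ n ≠ n₁} => -k₀ - ((n : ℤ) - n₁)) := by
          intro a b hab
          simp only [sub_right_inj, neg_inj, sub_left_inj] at hab
          exact Subtype.coe_injective hab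
        have b1 : ∑ n ∈ S, H ((n : ℤ) - n₁ - k₀) ≤ T := by
          rw [← Finset.sum_image (f := H) (g := fun n : {n : ℤ // n ≠ 0 ∧ n ≠ n₁} => (n : ℤ) - n₁ - k₀) (fun a _ b _ h => inj1 h)]
          exact Summable.sum_le_tsum _ (fun j _ => hHnn j) hH
        have b2 : ∑ n ∈ S, H (-k₀ - ((n : ℤ) - n₁)) ≤ T := by
          rw [← Finset.sum_image (f := H) (g := fun n : {n : ℤ // n ≠ 0 ∧ n ≠ n₁} => -k₀ - ((n : ℤ) - n₁)) (fun a _ b _ h => inj2 h)]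
          exact Summable.sum_le_tsum _ (fun j _ => hHnn j) hH
        linarith
    _ = K * (2 * T) := by ring
end

section
/- Let s ≥ -1/2 and, for real τ, τ₁ and nonzero integers n, n₁ with n ≠ n₁, set σ = max(|τ + m(n)|, |τ₁ + m(n₁)|, |τ - τ₁ + m(n - n₁)|). Then F_s := |n|^{2s+2} |n₁ (n - n₁)|^{-2s} / σ ≤ C for an absolute constant C. -/
set_option maxHeartbeats 800000 in
theorem ostrovsky_Fs_bound (s : ℝ) (hs : -1/2 ≤ s) :
    ∃ C : ℝ, 0 < C ∧ ∀ (τ τ₁ : ℝ) (n n₁ : ℤ), n ≠ 0 → n₁ ≠ 0 → n₁ ≠ n →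
      |(n : ℝ)| ^ (2 * s + 2) * |(n₁ : ℝ) * ((n : ℝ) - (n₁ : ℝ))| ^ (-(2 * s)) /
          max |τ + mOst n| (max |τ₁ + mOst n₁| |τ - τ₁ + mOst (n - n₁)|) ≤ C := by
  refine ⟨(3/2) * 2 ^ (2*s+1), by positivity, ?_⟩
  intro τ τ₁ n n₁ hn hn₁ hne
  have h2s1 : (0:ℝ) ≤ 2*s+1 := by linarith
  set a : ℝ := (n : ℝ) with ha_def
  have hsub : n - n₁ ≠ 0 := sub_ne_zero.mpr (Ne.symm hne)
  have ha0 : a ≠ 0 := Int.cast_ne_zero.mpr hn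
  have hb₁0 : ((n₁ : ℝ)) ≠ 0 := Int.cast_ne_zero.mpr hn₁
  have hb₂0 : a - (n₁ : ℝ) ≠ 0 := by
    have : ((n - n₁ : ℤ) : ℝ) ≠ 0 := Int.cast_ne_zero.mpr hsub
    push_cast at this; simpa using this
  set b : ℝ := (n₁ : ℝ) * (a - (n₁ : ℝ)) with hb_def
  have hb0 : b ≠ 0 := mul_ne_zero hb₁0 hb₂0
  -- integer lower bounds
  have hNa : 1 ≤ |a| := by
    have : (1:ℤ) ≤ |n| := Int.one_le_abs (by simpa using hn)
    calc (1:ℝ) ≤ |(n:ℤ)| := by exact_mod_cast this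
    _ = |a| := by push_cast; rfl
  have hx : 1 ≤ |(n₁ : ℝ)| := by
    have : (1:ℤ) ≤ |n₁| := Int.one_le_abs (by simpa using hn₁)
    calc (1:ℝ) ≤ |(n₁:ℤ)| := by exact_mod_cast this
    _ = |(n₁:ℝ)| := by push_cast; rfl
  have hy : 1 ≤ |a - (n₁ : ℝ)| := by
    have : (1:ℤ) ≤ |n - n₁| := Int.one_le_abs (by simpa using hsub)
    calc (1:ℝ) ≤ |(n - n₁ : ℤ)| := by exact_mod_cast this
    _ = |a - (n₁:ℝ)| := by push_cast; rfl
  have hNb : 1 ≤ |b| := by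
    rw [hb_def, abs_mul]; nlinarith
  have hab : |a| ≤ 2 * |b| := by
    have h1 : |a| ≤ |(n₁ : ℝ)| + |a - (n₁ : ℝ)| := by
      have := abs_add_le (n₁ : ℝ) (a - (n₁ : ℝ))
      simpa using this
    rw [hb_def, abs_mul]
    nlinarith
  -- the resonance function
  set x := τ + mOst n with hx_def
  set y := τ₁ + mOst n₁ with hy_def
  set z := τ - τ₁ + mOst (n - n₁) with hz_def
  set σ := max |x| (max |y| |z|) with hσ_def
  set R : ℝ := x - y - z with hR_def
  have hR : R = 3 * a * b + a / b - 1 / a := by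
    rw [hR_def, hx_def, hy_def, hz_def]
    simp only [mOst]
    push_cast
    rw [hb_def, ← ha_def]
    field_simp
    ring
  have hkey : R * (a * b) = 3 * a^2 * b^2 + a^2 - b := by
    rw [hR]; field_simp
  have ha2 : (1:ℝ) ≤ a^2 := by nlinarith [sq_abs a]
  have hb2 : |b| ≤ b^2 := by nlinarith [sq_abs b]
  have hposR : 2 * a^2 * b^2 ≤ 3 * a^2 * b^2 + a^2 - b := by
    nlinarith [mul_nonneg (by linarith : (0:ℝ) ≤ a^2 - 1) (sq_nonneg b),
      sq_nonneg (b - 1), le_abs_self b]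
  have hRabs : 2 * |a| * |b| ≤ |R| := by
    have hP : 0 < |a| * |b| := by positivity
    have h1 : |R * (a * b)| = |R| * (|a| * |b|) := by
      rw [abs_mul R (a * b), abs_mul a b]
    have habs : |R * (a * b)| = 3 * a^2 * b^2 + a^2 - b := by
      rw [hkey]; exact abs_of_nonneg (by linarith [hposR, mul_nonneg (sq_nonneg a) (sq_nonneg b)])
    have hsq : |a| * |b| * (|a| * |b|) = a^2 * b^2 := by
      rw [show |a| * |b| * (|a| * |b|) = |a|^2 * |b|^2 by ring, sq_abs, sq_abs]
    have h2 : 2 * (|a| * |b|) * (|a| * |b|) ≤ |R| * (|a| * |b|) := by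
      rw [← h1, habs]; linarith [hposR, hsq]
    have := le_of_mul_le_mul_right h2 hP
    linarith
  have hRσ : |R| ≤ 3 * σ := by
    have hx' : |x| ≤ σ := le_max_left _ _
    have hy' : |y| ≤ σ := le_trans (le_max_left _ _) (le_max_right _ _)
    have hz' : |z| ≤ σ := le_trans (le_max_right _ _) (le_max_right _ _)
    have h1 : |R| ≤ |x - y| + |z| := abs_sub _ _
    have h2 : |x - y| ≤ |x| + |y| := abs_sub _ _
    linarith
  have hσ : (2/3) * (|a| * |b|) ≤ σ := by linarith
  have hσpos : 0 < σ := by nlinarith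
  set N := |a| with hN_def
  set B := |b| with hB_def
  have hNpos : (0:ℝ) < N := by linarith
  have hBpos : (0:ℝ) < B := by linarith
  rw [div_le_iff₀ hσpos]
  have e1 : N ^ (2*s+2) = N ^ (2*s+1) * N := by
    rw [show 2*s+2 = (2*s+1)+1 by ring, Real.rpow_add_one (ne_of_gt hNpos)]
  have e2 : B ^ (-(2*s)) = B ^ (-(2*s+1)) * B := by
    rw [show -(2*s) = (-(2*s+1))+1 by ring, Real.rpow_add_one (ne_of_gt hBpos)]
  have e3 : N ^ (2*s+1) ≤ 2 ^ (2*s+1) * B ^ (2*s+1) := by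
    have h := Real.rpow_le_rpow (le_of_lt hNpos) hab h2s1
    rwa [Real.mul_rpow (by norm_num) (le_of_lt hBpos)] at h
  have e4 : B ^ (2*s+1) * B ^ (-(2*s+1)) = 1 := by
    rw [← Real.rpow_add hBpos, show (2*s+1) + (-(2*s+1)) = 0 by ring, Real.rpow_zero]
  have e5 : N ^ (2*s+1) * B ^ (-(2*s+1)) ≤ 2 ^ (2*s+1) := by
    have hB' : (0:ℝ) ≤ B ^ (-(2*s+1)) := Real.rpow_nonneg (le_of_lt hBpos) _
    calc N ^ (2*s+1) * B ^ (-(2*s+1)) ≤ (2 ^ (2*s+1) * B ^ (2*s+1)) * B ^ (-(2*s+1)) :=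
          mul_le_mul_of_nonneg_right e3 hB'
      _ = 2 ^ (2*s+1) * (B ^ (2*s+1) * B ^ (-(2*s+1))) := by ring
      _ = 2 ^ (2*s+1) := by rw [e4, mul_one]
  calc N ^ (2*s+2) * B ^ (-(2*s))
      = (N ^ (2*s+1) * B ^ (-(2*s+1))) * (N * B) := by rw [e1, e2]; ring
    _ ≤ 2 ^ (2*s+1) * (N * B) := by
        have : (0:ℝ) ≤ N * B := by positivity
        exact mul_le_mul_of_nonneg_right e5 this
    _ ≤ 2 ^ (2*s+1) * ((3/2) * σ) := by
        have h2p : (0:ℝ) < (2:ℝ) ^ (2*s+1) := Real.rpow_pos_of_pos (by norm_num) _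
        have : N * B ≤ (3/2) * σ := by linarith
        exact mul_le_mul_of_nonneg_left this (le_of_lt h2p)
    _ = (3/2) * 2 ^ (2*s+1) * σ := by ring
end

section
/- Let -1/2 ≤ s and 0 < r < 1/4. With σ = max(|τ + m(n)|, |τ₁ + m(n₁)|, |τ - τ₁ + m(n - n₁)|), one has F_{s,r} := |n|^{2s+2} |n₁ (n - n₁)|^{-2s} / σ^{2(1-r)} ≤ C / |n|^{2-4r} for a constant C depending only on s and r. -/
theorem ostrovsky_Fsr_bound (s r : ℝ) (hs : -1/2 ≤ s) (hr0 : 0 < r) (hr : r < 1/4) :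
    ∃ C : ℝ, 0 < C ∧ ∀ (τ τ₁ : ℝ) (n n₁ : ℤ), n ≠ 0 → n₁ ≠ 0 → n₁ ≠ n →
      |(n : ℝ)| ^ (2 * s + 2) * |(n₁ : ℝ) * ((n : ℝ) - (n₁ : ℝ))| ^ (-(2 * s)) /
          (max |τ + mOst n| (max |τ₁ + mOst n₁| |τ - τ₁ + mOst (n - n₁)|)) ^ (2 * (1 - r)) ≤
        C / |(n : ℝ)| ^ (2 - 4 * r) := by
  set e : ℝ := 2 * s + 2 - 2 * r with he_def
  have he : 0 < e := by rw [he_def]; linarith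
  refine ⟨(2 : ℝ) ^ e, Real.rpow_pos_of_pos two_pos _, ?_⟩
  intro τ τ₁ n n₁ hn hn₁ hne
  have hn' : (n : ℝ) ≠ 0 := Int.cast_ne_zero.mpr hn
  have hn₁' : (n₁ : ℝ) ≠ 0 := Int.cast_ne_zero.mpr hn₁
  have hd : (n : ℝ) - (n₁ : ℝ) ≠ 0 := by
    intro h
    exact hne (by exact_mod_cast (sub_eq_zero.mp h).symm)
  set a : ℝ := |(n : ℝ)| with ha_def
  set A : ℝ := |(n₁ : ℝ) * ((n : ℝ) - (n₁ : ℝ))| with hA_def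
  have ha1 : 1 ≤ a := by
    rw [ha_def, ← Int.cast_abs]
    exact_mod_cast Int.one_le_abs hn
  have hb1 : (1 : ℝ) ≤ |(n₁ : ℝ)| := by
    rw [← Int.cast_abs]; exact_mod_cast Int.one_le_abs hn₁
  have hc1 : (1 : ℝ) ≤ |(n : ℝ) - (n₁ : ℝ)| := by
    have h : (n : ℝ) - (n₁ : ℝ) = ((n - n₁ : ℤ) : ℝ) := by push_cast; ring
    rw [h, ← Int.cast_abs]
    exact_mod_cast Int.one_le_abs (sub_ne_zero.mpr (Ne.symm hne))
  have hA_eq : A = |(n₁ : ℝ)| * |(n : ℝ) - (n₁ : ℝ)| := by rw [hA_def, abs_mul]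
  have hA1 : 1 ≤ A := by rw [hA_eq]; nlinarith
  have ha0 : 0 < a := lt_of_lt_of_le one_pos ha1
  have hA0 : 0 < A := lt_of_lt_of_le one_pos hA1
  set σ : ℝ := max |τ + mOst n| (max |τ₁ + mOst n₁| |τ - τ₁ + mOst (n - n₁)|) with hσ_def
  -- resonance estimate : a * A ≤ σ
  have key : a * A ≤ σ := by
    set D : ℝ := (n : ℝ) * ((n₁ : ℝ) * ((n : ℝ) - (n₁ : ℝ))) with hD_def
    have hDabs : |D| = a * A := by rw [hD_def, abs_mul, ha_def, hA_def]
    have hD0 : D ≠ 0 := mul_ne_zero hn' (mul_ne_zero hn₁' hd)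
    set P : ℝ := (n : ℝ) ^ 2 - (n : ℝ) * (n₁ : ℝ) + (n₁ : ℝ) ^ 2 with hP_def
    have hn₁sq : 0 < (n₁ : ℝ) ^ 2 := by positivity
    have hP : 0 < P := by
      rw [hP_def]; nlinarith [sq_nonneg (2 * (n : ℝ) - (n₁ : ℝ))]
    have hres : mOst n - mOst n₁ - mOst (n - n₁) = 3 * D + P / D := by
      simp only [mOst, hD_def, hP_def]
      push_cast
      field_simp
      ring
    have h3 : 3 * |D| ≤ |mOst n - mOst n₁ - mOst (n - n₁)| := by
      rw [hres]
      rcases hD0.lt_or_gt with hneg | hpos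
      · have hPD : P / D < 0 := div_neg_of_pos_of_neg hP hneg
        rw [abs_of_neg hneg, abs_of_neg (by linarith)]
        linarith
      · have hPD : 0 < P / D := div_pos hP hpos
        rw [abs_of_pos hpos, abs_of_pos (by linarith)]
        linarith
    have h1 : |τ + mOst n| ≤ σ := le_max_left _ _
    have h2 : |τ₁ + mOst n₁| ≤ σ := le_trans (le_max_left _ _) (le_max_right _ _)
    have h3' : |τ - τ₁ + mOst (n - n₁)| ≤ σ := le_trans (le_max_right _ _) (le_max_right _ _)
    have hsum : |mOst n - mOst n₁ - mOst (n - n₁)| ≤ 3 * σ := by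
      have heq : mOst n - mOst n₁ - mOst (n - n₁) =
          (τ + mOst n) + (-(τ₁ + mOst n₁)) + (-(τ - τ₁ + mOst (n - n₁))) := by ring
      calc |mOst n - mOst n₁ - mOst (n - n₁)|
          = |(τ + mOst n) + (-(τ₁ + mOst n₁)) + (-(τ - τ₁ + mOst (n - n₁)))| := by rw [heq]
        _ ≤ |τ + mOst n| + |-(τ₁ + mOst n₁)| + |-(τ - τ₁ + mOst (n - n₁))| :=
            abs_add_three _ _ _
        _ = |τ + mOst n| + |τ₁ + mOst n₁| + |τ - τ₁ + mOst (n - n₁)| := by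
            rw [abs_neg, abs_neg]
        _ ≤ 3 * σ := by linarith
    have : 3 * (a * A) ≤ 3 * σ := by rw [← hDabs]; linarith
    linarith
  have hσ0 : 0 < σ := lt_of_lt_of_le (by nlinarith) key
  -- monotonicity in σ
  have hnum_pos : 0 < a ^ (2 * s + 2) * A ^ (-(2 * s)) :=
    mul_pos (Real.rpow_pos_of_pos ha0 _) (Real.rpow_pos_of_pos hA0 _)
  have ht : (0 : ℝ) < 2 * (1 - r) := by linarith
  have hσpow : (a * A) ^ (2 * (1 - r)) ≤ σ ^ (2 * (1 - r)) :=
    Real.rpow_le_rpow (by positivity) key ht.le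
  have step1 : a ^ (2 * s + 2) * A ^ (-(2 * s)) / σ ^ (2 * (1 - r)) ≤
      a ^ (2 * s + 2) * A ^ (-(2 * s)) / (a * A) ^ (2 * (1 - r)) := by
    gcongr
  have step2 : a ^ (2 * s + 2) * A ^ (-(2 * s)) / (a * A) ^ (2 * (1 - r)) =
      a ^ (2 * s + 2 * r) * A ^ (-e) := by
    rw [Real.mul_rpow ha0.le hA0.le]
    have e1 : a ^ (2 * s + 2 * r) = a ^ (2 * s + 2) / a ^ (2 * (1 - r)) := by
      rw [← Real.rpow_sub ha0]; ring_nf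
    have e2 : A ^ (-e) = A ^ (-(2 * s)) / A ^ (2 * (1 - r)) := by
      rw [← Real.rpow_sub hA0, he_def]; ring_nf
    rw [e1, e2]
    field_simp
  -- a ≤ 2 A
  have haA2 : a ≤ 2 * A := by
    have h1 : a = |(n₁ : ℝ) + ((n : ℝ) - (n₁ : ℝ))| := by rw [ha_def]; congr 1; ring
    have h2 : a ≤ |(n₁ : ℝ)| + |(n : ℝ) - (n₁ : ℝ)| := h1 ▸ abs_add_le _ _
    rw [hA_eq]; nlinarith
  have hAe : A ^ (-e) ≤ 2 ^ e * a ^ (-e) := by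
    have h1 : (a / 2) ^ e ≤ A ^ e :=
      Real.rpow_le_rpow (by positivity) (by linarith) he.le
    have h2 : (A ^ e)⁻¹ ≤ ((a / 2) ^ e)⁻¹ :=
      inv_anti₀ (Real.rpow_pos_of_pos (by positivity) _) h1
    have h3 : ((a / 2) ^ e)⁻¹ = 2 ^ e * (a ^ e)⁻¹ := by
      rw [Real.div_rpow ha0.le (by norm_num)]
      field_simp
    rw [Real.rpow_neg hA0.le, Real.rpow_neg ha0.le]
    calc (A ^ e)⁻¹ ≤ ((a / 2) ^ e)⁻¹ := h2
      _ = 2 ^ e * (a ^ e)⁻¹ := h3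
  have step3 : a ^ (2 * s + 2 * r) * A ^ (-e) ≤ 2 ^ e / a ^ (2 - 4 * r) := by
    have h1 : a ^ (2 * s + 2 * r) * A ^ (-e) ≤ a ^ (2 * s + 2 * r) * (2 ^ e * a ^ (-e)) :=
      mul_le_mul_of_nonneg_left hAe (Real.rpow_pos_of_pos ha0 _).le
    have h2 : a ^ (2 * s + 2 * r) * (2 ^ e * a ^ (-e)) = 2 ^ e / a ^ (2 - 4 * r) := by
      have e1 : a ^ (2 * s + 2 * r) * a ^ (-e) = a ^ (-(2 - 4 * r)) := by
        rw [← Real.rpow_add ha0]; congr 1; rw [he_def]; ring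
      calc a ^ (2 * s + 2 * r) * (2 ^ e * a ^ (-e))
          = 2 ^ e * (a ^ (2 * s + 2 * r) * a ^ (-e)) := by ring
        _ = 2 ^ e * a ^ (-(2 - 4 * r)) := by rw [e1]
        _ = 2 ^ e / a ^ (2 - 4 * r) := by
            rw [Real.rpow_neg ha0.le, div_eq_mul_inv]
    linarith
  calc a ^ (2 * s + 2) * A ^ (-(2 * s)) / σ ^ (2 * (1 - r))
      ≤ a ^ (2 * s + 2) * A ^ (-(2 * s)) / (a * A) ^ (2 * (1 - r)) := step1
    _ = a ^ (2 * s + 2 * r) * A ^ (-e) := step2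
    _ ≤ 2 ^ e / a ^ (2 - 4 * r) := step3
end
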